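/- arXiv:1401.7295 — 4 statements merged into one kernel-verified Lean document; each statement's English description precedes it below -/
import Mathlib

section
/- Let Y be an n-dimensional compact connected C⁰-submanifold with nonempty boundary of a smooth connected Riemannian n-manifold X without boundary, and suppose that the relative boundary distance function ρ_Y is finite everywhere and is a metric on Y. Then any two points x,y ∈ Y can be joined by a shortest curve in the metric ρ_Y: there exists γ : [0,L] → Y with L = ρ_Y(x,y), γ(0)=x, γ(L)=y, and ρ_Y(γ(s),γ(t)) = t − s for all 0 ≤ s < t ≤ L. -/
open Set Filter Topology Manifold ENNReal EuclideanGeometry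

noncomputable section

/-- The infimum of lengths of continuous paths joining `a` and `b` inside `S`
(standing in for the infimum of lengths of smooth paths). -/
def infPathLength {X : Type*} [PseudoEMetricSpace X] (S : Set X) (a b : X) : ℝ≥0∞ :=
  ⨅ γ ∈ {γ : ℝ → X | ContinuousOn γ (Set.Icc 0 1) ∧
      (∀ t ∈ Set.Icc (0:ℝ) 1, γ t ∈ S) ∧ γ 0 = a ∧ γ 1 = b},
    eVariationOn γ (Set.Icc 0 1)

/-- `liminf` of the infimal path lengths through `S` as the endpoints tend to `x`, `y`
within `S`. -/
def relMetricVia {X : Type*} [PseudoEMetricSpace X] (S : Set X) (x y : X) : ℝ≥0∞ :=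
  Filter.liminf (fun p : X × X => infPathLength S p.1 p.2) ((𝓝[S] x) ×ˢ (𝓝[S] y))

/-- The relative metric `ρ_Y` of a submanifold `Y`: the `liminf`, as `x' → x` and `y' → y`
with `x', y' ∈ Int Y`, of the infimal length of paths joining `x'` and `y'` in `Int Y`. -/
def relMetric {X : Type*} [PseudoEMetricSpace X] (Y : Set X) (x y : X) : ℝ≥0∞ :=
  relMetricVia (interior Y) x y

/-- `ρ` is a metric on the set `Y`. -/
def IsMetricOn {X : Type*} (ρ : X → X → ℝ≥0∞) (Y : Set X) : Prop :=
  (∀ x ∈ Y, ρ x x = 0) ∧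
  (∀ x ∈ Y, ∀ y ∈ Y, ρ x y = 0 → x = y) ∧
  (∀ x ∈ Y, ∀ y ∈ Y, ρ x y = ρ y x) ∧
  (∀ x ∈ Y, ∀ y ∈ Y, ∀ z ∈ Y, ρ x z ≤ ρ x y + ρ y z)

/-- `γ : [0,1] → Y` is a shortest path from `a` to `b` in the (generalized) metric `ρ`:
a path in `Y` along which `ρ` is additive (equivalently, whose `ρ`-length is `ρ a b`). -/
def IsShortestPath {X : Type*} [PseudoEMetricSpace X] (ρ : X → X → ℝ≥0∞) (Y : Set X)
    (γ : ℝ → X) (a b : X) : Prop :=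
  ContinuousOn γ (Set.Icc 0 1) ∧ (∀ t ∈ Set.Icc (0:ℝ) 1, γ t ∈ Y) ∧ γ 0 = a ∧ γ 1 = b ∧
  ∀ s t u : ℝ, 0 ≤ s → s ≤ t → t ≤ u → u ≤ 1 →
    ρ (γ s) (γ u) = ρ (γ s) (γ t) + ρ (γ t) (γ u)

/-- `Y` is strictly convex in its relative metric `ρ_Y`. -/
def StrictlyConvexIn {X : Type*} [PseudoEMetricSpace X] (Y : Set X) : Prop :=
  ∀ a ∈ Y, ∀ b ∈ Y, ∀ γ : ℝ → X, IsShortestPath (relMetric Y) Y γ a b →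
    ∀ t ∈ Set.Ioo (0:ℝ) 1, γ t ∈ interior Y

/-- Property (○): shortest paths between boundary points have their open interior in `Int Y`. -/
def PropertyCirc {X : Type*} [PseudoEMetricSpace X] (Y : Set X) : Prop :=
  ∀ a ∈ frontier Y, ∀ b ∈ frontier Y, ∀ γ : ℝ → X, IsShortestPath (relMetric Y) Y γ a b →
    ∀ t ∈ Set.Ioo (0:ℝ) 1, γ t ∈ interior Y

/-- The sets `B₁`, `B₂` are isometric w.r.t. the generalized metrics `ρ₁`, `ρ₂`. -/
def BoundaryIsometric {X : Type*} (ρ₁ ρ₂ : X → X → ℝ≥0∞) (B₁ B₂ : Set X) : Prop :=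
  ∃ f : B₁ → B₂, Function.Bijective f ∧ ∀ a b : B₁, ρ₂ (f a) (f b) = ρ₁ a b

section AuxLemmas

variable {X : Type*} [MetricSpace X] {S : Set X}

lemma relMetricVia_le_infPathLength {a b : X} (ha : a ∈ S) (hb : b ∈ S) :
    relMetricVia S a b ≤ infPathLength S a b := by
  have hp : (pure (a, b) : Filter (X × X)) ≤ (𝓝[S] a) ×ˢ (𝓝[S] b) := by
    rw [Filter.le_prod]
    constructor <;> rw [Filter.tendsto_pure_left] <;> intro s hs
    · exact mem_of_mem_nhdsWithin ha hs
    · exact mem_of_mem_nhdsWithin hb hs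
  apply Filter.liminf_le_of_frequently_le'
  refine Filter.Frequently.filter_mono ?_ hp
  exact Filter.Eventually.frequently (Filter.eventually_pure.2 le_rfl)

lemma relMetricVia_le_of_tendsto {a b : X} {u v : ℕ → X} {c : ℕ → ℝ≥0∞} {c₀ : ℝ≥0∞}
    (hu : Tendsto u atTop (𝓝 a)) (hv : Tendsto v atTop (𝓝 b))
    (hD : ∀ n, relMetricVia S (u n) (v n) ≤ c n) (hc : Tendsto c atTop (𝓝 c₀)) :
    relMetricVia S a b ≤ c₀ := by
  refine le_of_forall_gt_imp_ge_of_dense fun c' hc' => ?_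
  unfold relMetricVia
  apply Filter.liminf_le_of_frequently_le'
  rw [Filter.frequently_iff]
  intro U hU
  rcases Filter.mem_prod_iff.1 hU with ⟨A, hA, B, hB, hAB⟩
  rcases mem_nhdsWithin.1 hA with ⟨VA, hVAopen, haVA, hVA⟩
  rcases mem_nhdsWithin.1 hB with ⟨VB, hVBopen, hbVB, hVB⟩
  rcases Metric.isOpen_iff.1 hVAopen a haVA with ⟨ra, hra, hballa⟩
  rcases Metric.isOpen_iff.1 hVBopen b hbVB with ⟨rb, hrb, hballb⟩
  have h1 : ∀ᶠ n in atTop, u n ∈ Metric.ball a (ra / 2) :=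
    hu (Metric.ball_mem_nhds a (by positivity))
  have h2 : ∀ᶠ n in atTop, v n ∈ Metric.ball b (rb / 2) :=
    hv (Metric.ball_mem_nhds b (by positivity))
  have h3 : ∀ᶠ n in atTop, c n < c' := hc.eventually_lt_const hc'
  rcases (h1.and (h2.and h3)).exists with ⟨n, hn1, hn2, hn3⟩
  have hlim : relMetricVia S (u n) (v n) < c' := (hD n).trans_lt hn3
  unfold relMetricVia at hlim
  have hfreq := frequently_lt_of_liminf_lt (by isBoundedDefault) hlim
  have hmemA : Metric.ball (u n) (ra / 2) ∩ S ∈ 𝓝[S] (u n) :=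
    Filter.inter_mem (mem_nhdsWithin_of_mem_nhds (Metric.ball_mem_nhds _ (by positivity)))
      self_mem_nhdsWithin
  have hmemB : Metric.ball (v n) (rb / 2) ∩ S ∈ 𝓝[S] (v n) :=
    Filter.inter_mem (mem_nhdsWithin_of_mem_nhds (Metric.ball_mem_nhds _ (by positivity)))
      self_mem_nhdsWithin
  rcases (hfreq.and_eventually (Filter.eventually_of_mem (Filter.prod_mem_prod hmemA hmemB)
    fun p hp => hp)).exists with ⟨p, hplt, hp1, hp2⟩
  refine ⟨p, hAB ⟨?_, ?_⟩, hplt.le⟩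
  · refine hVA ⟨hballa ?_, hp1.2⟩
    have h1' := hp1.1
    rw [Metric.mem_ball] at h1' hn1 ⊢
    calc dist p.1 a ≤ dist p.1 (u n) + dist (u n) a := dist_triangle _ _ _
      _ < ra / 2 + ra / 2 := add_lt_add h1' hn1
      _ = ra := by ring
  · refine hVB ⟨hballb ?_, hp2.2⟩
    have h2' := hp2.1
    rw [Metric.mem_ball] at h2' hn2 ⊢
    calc dist p.2 b ≤ dist p.2 (v n) + dist (v n) b := dist_triangle _ _ _
      _ < rb / 2 + rb / 2 := add_lt_add h2' hn2
      _ = rb := by ring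

lemma exists_path_of_lt {a b : X} {c : ℝ≥0∞} (h : relMetricVia S a b < c) {U V : Set X}
    (hU : U ∈ 𝓝 a) (hV : V ∈ 𝓝 b) :
    ∃ σ : ℝ → X, ContinuousOn σ (Set.Icc 0 1) ∧ (∀ t ∈ Set.Icc (0:ℝ) 1, σ t ∈ S) ∧
      σ 0 ∈ U ∧ σ 1 ∈ V ∧ eVariationOn σ (Set.Icc 0 1) < c := by
  unfold relMetricVia at h
  have hfreq := frequently_lt_of_liminf_lt (by isBoundedDefault) h
  have hmemA : U ∩ S ∈ 𝓝[S] a :=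
    Filter.inter_mem (mem_nhdsWithin_of_mem_nhds hU) self_mem_nhdsWithin
  have hmemB : V ∩ S ∈ 𝓝[S] b :=
    Filter.inter_mem (mem_nhdsWithin_of_mem_nhds hV) self_mem_nhdsWithin
  rcases (hfreq.and_eventually (Filter.eventually_of_mem (Filter.prod_mem_prod hmemA hmemB)
    fun p hp => hp)).exists with ⟨p, hplt, hp1, hp2⟩
  unfold infPathLength at hplt
  simp only [iInf_lt_iff] at hplt
  rcases hplt with ⟨σ, hσ, hvar⟩
  rcases hσ with ⟨hσc, hσS, hσ0, hσ1⟩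
  exact ⟨σ, hσc, hσS, by rw [hσ0]; exact hp1.1, by rw [hσ1]; exact hp2.1, hvar⟩

lemma infPathLength_le_eVariationOn {σ : ℝ → X} (hσc : ContinuousOn σ (Set.Icc 0 1))
    (hσS : ∀ t ∈ Set.Icc (0:ℝ) 1, σ t ∈ S) {r t : ℝ} (hr : 0 ≤ r) (hrt : r ≤ t) (ht : t ≤ 1) :
    infPathLength S (σ r) (σ t) ≤ eVariationOn σ (Set.Icc r t) := by
  set φ : ℝ → ℝ := fun u => r + u * (t - r) with hφ
  have hsub : Set.Icc r t ⊆ Set.Icc 0 1 := Set.Icc_subset_Icc hr ht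
  have hmaps : ∀ u ∈ Set.Icc (0:ℝ) 1, φ u ∈ Set.Icc r t := by
    rintro u ⟨h0u, hu1⟩
    constructor
    · simp only [hφ]; nlinarith
    · simp only [hφ]; nlinarith [mul_nonneg (sub_nonneg.2 hu1) (sub_nonneg.2 hrt)]
  have hmono : MonotoneOn φ (Set.Icc 0 1) := by
    intro u hu w hw huw
    simp only [hφ]
    nlinarith [mul_nonneg (sub_nonneg.2 huw) (sub_nonneg.2 hrt)]
  have hφcont : Continuous φ := by fun_prop
  have hφ0 : φ 0 = r := by simp [hφ]
  have hφ1 : φ 1 = t := by simp [hφ]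
  have hcont : ContinuousOn (σ ∘ φ) (Set.Icc 0 1) :=
    hσc.comp hφcont.continuousOn fun u hu => hsub (hmaps u hu)
  have key : eVariationOn (σ ∘ φ) (Set.Icc 0 1) = eVariationOn σ (φ '' Set.Icc 0 1) :=
    eVariationOn.comp_eq_of_monotoneOn σ φ hmono
  have hstep : infPathLength S (σ r) (σ t) ≤ eVariationOn (σ ∘ φ) (Set.Icc 0 1) := by
    unfold infPathLength
    apply iInf₂_le (σ ∘ φ)
    refine ⟨hcont, fun u hu => hσS _ (hsub (hmaps u hu)), ?_, ?_⟩
    · show σ (φ 0) = σ r; rw [hφ0]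
    · show σ (φ 1) = σ t; rw [hφ1]
  refine hstep.trans ?_
  rw [key]
  exact eVariationOn.mono σ (by rintro _ ⟨u, hu, rfl⟩; exact hmaps u hu)

lemma edist_le_relMetricVia (hE : ∀ a b : X, edist a b ≤ infPathLength S a b) (x y : X) :
    edist x y ≤ relMetricVia S x y := by
  unfold relMetricVia
  rcases eq_or_ne ((𝓝[S] x) ×ˢ (𝓝[S] y)) ⊥ with hbot | hne
  · rw [hbot, Filter.liminf_bot]; exact le_top
  · haveI : ((𝓝[S] x) ×ˢ (𝓝[S] y)).NeBot := ⟨hne⟩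
    have h1 : Tendsto (fun p : X × X => edist p.1 p.2) ((𝓝[S] x) ×ˢ (𝓝[S] y))
        (𝓝 (edist x y)) := by
      apply (continuous_edist.tendsto (x, y)).mono_left
      calc (𝓝[S] x) ×ˢ (𝓝[S] y) ≤ 𝓝 x ×ˢ 𝓝 y :=
            Filter.prod_mono nhdsWithin_le_nhds nhdsWithin_le_nhds
        _ = 𝓝 (x, y) := nhds_prod_eq.symm
    rw [← h1.liminf_eq]
    exact Filter.liminf_le_liminf (Filter.Eventually.of_forall fun p => hE p.1 p.2)

lemma exists_path_mid {σ : ℝ → X} (hσc : ContinuousOn σ (Set.Icc 0 1))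
    (hσS : ∀ t ∈ Set.Icc (0:ℝ) 1, σ t ∈ S) :
    ∃ m ∈ S, relMetricVia S (σ 0) m ≤ eVariationOn σ (Set.Icc 0 1) / 2 ∧
      relMetricVia S m (σ 1) ≤ eVariationOn σ (Set.Icc 0 1) / 2 := by
  set ℓ := eVariationOn σ (Set.Icc 0 1) with hℓ
  set A : Set ℝ := {t | t ∈ Set.Icc (0:ℝ) 1 ∧ eVariationOn σ (Set.Icc 0 t) ≤ ℓ / 2} with hA
  have h00 : eVariationOn σ (Set.Icc (0:ℝ) 0) = 0 := by
    rw [Set.Icc_self]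
    exact eVariationOn.subsingleton σ Set.subsingleton_singleton
  have h11 : eVariationOn σ (Set.Icc (1:ℝ) 1) = 0 := by
    rw [Set.Icc_self]
    exact eVariationOn.subsingleton σ Set.subsingleton_singleton
  have h0A : (0:ℝ) ∈ A := ⟨⟨le_rfl, zero_le_one⟩, by rw [h00]; exact zero_le⟩
  have hbdd : BddAbove A := ⟨1, fun t ht => ht.1.2⟩
  set T := sSup A with hT
  have hT0 : 0 ≤ T := le_csSup hbdd h0A
  have hT1 : T ≤ 1 := csSup_le ⟨0, h0A⟩ fun t ht => ht.1.2
  have hTmem : T ∈ Set.Icc (0:ℝ) 1 := ⟨hT0, hT1⟩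
  have hmT : σ T ∈ S := hσS T hTmem
  have hsplit : ∀ t, 0 ≤ t → t ≤ 1 →
      eVariationOn σ (Set.Icc 0 t) + eVariationOn σ (Set.Icc t 1) = ℓ := by
    intro t h0 h1'
    have := eVariationOn.Icc_add_Icc σ h0 h1' (Set.mem_univ t) (s := Set.univ)
    simpa using this
  have fact1 : ∀ t, 0 ≤ t → t < T → eVariationOn σ (Set.Icc 0 t) ≤ ℓ / 2 := by
    intro t h0 hlt
    rcases exists_lt_of_lt_csSup ⟨0, h0A⟩ hlt with ⟨t', ht'A, htt'⟩
    exact (eVariationOn.mono σ (Set.Icc_subset_Icc le_rfl htt'.le)).trans ht'A.2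
  have fact2 : ∀ t, t ≤ 1 → T < t → eVariationOn σ (Set.Icc t 1) ≤ ℓ / 2 := by
    intro t h1' hlt
    have htA : t ∉ A := fun h => absurd (le_csSup hbdd h) (not_le.2 hlt)
    have h0t : (0:ℝ) ≤ t := hT0.trans hlt.le
    have hgt : ℓ / 2 < eVariationOn σ (Set.Icc 0 t) := by
      by_contra hcon
      exact htA ⟨⟨h0t, h1'⟩, not_lt.1 hcon⟩
    by_contra hcon
    rw [not_le] at hcon
    have := ENNReal.add_lt_add hgt hcon
    rw [ENNReal.add_halves, hsplit t h0t h1'] at this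
    exact lt_irrefl _ this
  -- D-bounds
  have factD1 : ∀ t, t ∈ Set.Icc (0:ℝ) 1 → eVariationOn σ (Set.Icc 0 t) ≤ ℓ / 2 →
      relMetricVia S (σ 0) (σ t) ≤ ℓ / 2 := by
    intro t htm hvar
    exact ((relMetricVia_le_infPathLength (hσS 0 ⟨le_rfl, zero_le_one⟩) (hσS t htm)).trans
      (infPathLength_le_eVariationOn hσc hσS le_rfl htm.1 htm.2)).trans hvar
  have factD2 : ∀ t, t ∈ Set.Icc (0:ℝ) 1 → eVariationOn σ (Set.Icc t 1) ≤ ℓ / 2 →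
      relMetricVia S (σ t) (σ 1) ≤ ℓ / 2 := by
    intro t htm hvar
    exact ((relMetricVia_le_infPathLength (hσS t htm) (hσS 1 ⟨zero_le_one, le_rfl⟩)).trans
      (infPathLength_le_eVariationOn hσc hσS htm.1 htm.2 le_rfl)).trans hvar
  -- sequences
  set sn : ℕ → ℝ := fun n => max (T - 1/(n+1)) 0 with hsn
  set tn : ℕ → ℝ := fun n => min (T + 1/(n+1)) 1 with htn
  have hposn : ∀ n : ℕ, 0 < 1/((n:ℝ)+1) := fun n => by positivity
  have hsnmem : ∀ n, sn n ∈ Set.Icc (0:ℝ) 1 := by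
    intro n
    have := hposn n
    exact ⟨le_max_right _ _, max_le (by linarith) zero_le_one⟩
  have htnmem : ∀ n, tn n ∈ Set.Icc (0:ℝ) 1 := by
    intro n
    have := hposn n
    exact ⟨le_min (by linarith) zero_le_one, min_le_right _ _⟩
  have hsnle : ∀ n, sn n ≤ T := by
    intro n
    have := hposn n
    exact max_le (by linarith) hT0
  have htnge : ∀ n, T ≤ tn n := by
    intro n
    have := hposn n
    exact le_min (by linarith) hT1
  have hone : Tendsto (fun n : ℕ => 1/((n:ℝ)+1)) atTop (𝓝 0) :=
    tendsto_one_div_add_atTop_nhds_zero_nat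
  have hsnT : Tendsto sn atTop (𝓝 T) := by
    have : Tendsto (fun n : ℕ => T - 1/((n:ℝ)+1)) atTop (𝓝 (T - 0)) :=
      tendsto_const_nhds.sub hone
    rw [sub_zero] at this
    have h2 := this.max (tendsto_const_nhds (x := (0:ℝ)))
    rw [max_eq_left hT0] at h2
    exact h2
  have htnT : Tendsto tn atTop (𝓝 T) := by
    have : Tendsto (fun n : ℕ => T + 1/((n:ℝ)+1)) atTop (𝓝 (T + 0)) :=
      tendsto_const_nhds.add hone
    rw [add_zero] at this
    have h2 := this.min (tendsto_const_nhds (x := (1:ℝ)))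
    rw [min_eq_left hT1] at h2
    exact h2
  have hσsn : Tendsto (fun n => σ (sn n)) atTop (𝓝 (σ T)) :=
    ((hσc T hTmem).tendsto).comp
      (tendsto_nhdsWithin_of_tendsto_nhds_of_eventually_within _ hsnT
        (Filter.Eventually.of_forall hsnmem))
  have hσtn : Tendsto (fun n => σ (tn n)) atTop (𝓝 (σ T)) :=
    ((hσc T hTmem).tendsto).comp
      (tendsto_nhdsWithin_of_tendsto_nhds_of_eventually_within _ htnT
        (Filter.Eventually.of_forall htnmem))
  have hbd1 : ∀ n, relMetricVia S (σ 0) (σ (sn n)) ≤ ℓ / 2 := by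
    intro n
    rcases lt_or_eq_of_le (hsnle n) with h | h
    · exact factD1 _ (hsnmem n) (fact1 _ (hsnmem n).1 h)
    · rcases le_or_gt T 0 with hT0' | hT0'
      · have hT00 : T = 0 := le_antisymm hT0' hT0
        refine factD1 _ (hsnmem n) ?_
        rw [h, hT00, h00]
        exact zero_le
      · exfalso
        have : sn n < T := by
          have h1n : 0 < 1/((n:ℝ)+1) := by positivity
          simp only [hsn]
          rcases le_or_gt (T - 1/((n:ℝ)+1)) 0 with hc | hc
          · rw [max_eq_right hc]; exact hT0'
          · rw [max_eq_left hc.le]; linarith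
        exact absurd h this.ne
  have hbd2 : ∀ n, relMetricVia S (σ (tn n)) (σ 1) ≤ ℓ / 2 := by
    intro n
    rcases lt_or_eq_of_le (htnge n) with h | h
    · exact factD2 _ (htnmem n) (fact2 _ (htnmem n).2 h)
    · rcases le_or_gt 1 T with hT1' | hT1'
      · have hT11 : T = 1 := le_antisymm hT1 hT1'
        rw [← h, hT11]
        exact factD2 _ ⟨zero_le_one, le_rfl⟩ (by rw [h11]; exact zero_le)
      · exfalso
        have : T < tn n := by
          have h1n : 0 < 1/((n:ℝ)+1) := by positivity
          simp only [htn]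
          rcases le_or_gt 1 (T + 1/((n:ℝ)+1)) with hc | hc
          · rw [min_eq_right hc]; exact hT1'
          · rw [min_eq_left hc.le]; linarith
        exact absurd h this.ne
  refine ⟨σ T, hmT, ?_, ?_⟩
  · exact relMetricVia_le_of_tendsto tendsto_const_nhds hσsn hbd1 tendsto_const_nhds
  · exact relMetricVia_le_of_tendsto hσtn tendsto_const_nhds hbd2 tendsto_const_nhds

lemma exists_midpoint {Y : Set X} (hSY : S ⊆ Y) (hYcpt : IsCompact Y)
    {a b : X} (hfin : relMetricVia S a b ≠ ⊤) :
    ∃ m ∈ Y, relMetricVia S a m ≤ relMetricVia S a b / 2 ∧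
      relMetricVia S m b ≤ relMetricVia S a b / 2 := by
  set L := relMetricVia S a b with hL
  have hstep : ∀ k : ℕ, ∃ m ∈ S, ∃ a' b' : X, dist a' a < 1/((k:ℝ)+1) ∧
      dist b' b < 1/((k:ℝ)+1) ∧
      relMetricVia S a' m ≤ L / 2 + ((k:ℝ≥0∞)+1)⁻¹ ∧
      relMetricVia S m b' ≤ L / 2 + ((k:ℝ≥0∞)+1)⁻¹ := by
    intro k
    have hne : ((k:ℝ≥0∞)+1)⁻¹ ≠ 0 := by simp [ENNReal.inv_ne_zero]
    have hlt : L < L + ((k:ℝ≥0∞)+1)⁻¹ := ENNReal.lt_add_right hfin hne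
    obtain ⟨σ, hσc, hσS, h0, h1, hvar⟩ := exists_path_of_lt hlt
      (Metric.ball_mem_nhds a (by positivity : (0:ℝ) < 1/((k:ℝ)+1)))
      (Metric.ball_mem_nhds b (by positivity : (0:ℝ) < 1/((k:ℝ)+1)))
    obtain ⟨m, hmS, hm1, hm2⟩ := exists_path_mid hσc hσS
    have hhalf : eVariationOn σ (Set.Icc 0 1) / 2 ≤ L / 2 + ((k:ℝ≥0∞)+1)⁻¹ := by
      calc eVariationOn σ (Set.Icc 0 1) / 2 ≤ (L + ((k:ℝ≥0∞)+1)⁻¹) / 2 :=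
            ENNReal.div_le_div_right hvar.le 2
        _ = L / 2 + ((k:ℝ≥0∞)+1)⁻¹ / 2 := ENNReal.add_div
        _ ≤ L / 2 + ((k:ℝ≥0∞)+1)⁻¹ := add_le_add_right (ENNReal.half_le_self) _
    exact ⟨m, hmS, σ 0, σ 1, by simpa [Metric.mem_ball] using h0,
      by simpa [Metric.mem_ball] using h1, hm1.trans hhalf, hm2.trans hhalf⟩
  choose m hmS a' b' ha' hb' hma hmb using hstep
  obtain ⟨m₀, hm₀Y, φ, hφ, hconv⟩ := hYcpt.tendsto_subseq (fun k => hSY (hmS k))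
  have hdist : ∀ k, (1:ℝ)/((φ k:ℝ)+1) ≤ 1/((k:ℝ)+1) := by
    intro k
    apply one_div_le_one_div_of_le (by positivity)
    have h1 : k ≤ φ k := hφ.le_apply
    have h2 : (k:ℝ) ≤ (φ k : ℝ) := by exact_mod_cast h1
    linarith
  have ha'T : Tendsto (fun k => a' (φ k)) atTop (𝓝 a) := by
    rw [tendsto_iff_dist_tendsto_zero]
    apply squeeze_zero (fun k => dist_nonneg) (fun k => ((ha' (φ k)).le.trans (hdist k)))
      tendsto_one_div_add_atTop_nhds_zero_nat
  have hb'T : Tendsto (fun k => b' (φ k)) atTop (𝓝 b) := by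
    rw [tendsto_iff_dist_tendsto_zero]
    apply squeeze_zero (fun k => dist_nonneg) (fun k => ((hb' (φ k)).le.trans (hdist k)))
      tendsto_one_div_add_atTop_nhds_zero_nat
  have hcseq : Tendsto (fun k : ℕ => L / 2 + ((k:ℝ≥0∞)+1)⁻¹) atTop (𝓝 (L / 2)) := by
    have h1 : Tendsto (fun k : ℕ => ((k:ℝ≥0∞)+1)⁻¹) atTop (𝓝 0) := by
      have h0 := ENNReal.tendsto_inv_nat_nhds_zero.comp (tendsto_add_atTop_nat 1)
      have he : (fun k : ℕ => ((k:ℝ≥0∞)+1)⁻¹) = (fun n : ℕ => ((n:ℝ≥0∞))⁻¹) ∘ (fun a => a + 1) := by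
        funext k; simp [Function.comp]
      rw [he]
      exact h0
    have := (tendsto_const_nhds (x := L / 2) (f := atTop (α := ℕ))).add h1
    simpa using this
  have hbnd1 : ∀ k, relMetricVia S (a' (φ k)) (m (φ k)) ≤ L / 2 + ((k:ℝ≥0∞)+1)⁻¹ := by
    intro k
    refine (hma (φ k)).trans (add_le_add_right ?_ _)
    apply ENNReal.inv_le_inv.2
    apply add_le_add_left
    exact_mod_cast hφ.le_apply
  have hbnd2 : ∀ k, relMetricVia S (m (φ k)) (b' (φ k)) ≤ L / 2 + ((k:ℝ≥0∞)+1)⁻¹ := by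
    intro k
    refine (hmb (φ k)).trans (add_le_add_right ?_ _)
    apply ENNReal.inv_le_inv.2
    apply add_le_add_left
    exact_mod_cast hφ.le_apply
  exact ⟨m₀, hm₀Y,
    relMetricVia_le_of_tendsto ha'T hconv hbnd1 hcseq,
    relMetricVia_le_of_tendsto hconv hb'T hbnd2 hcseq⟩

end AuxLemmas

/-- Theorem 2.3: if the relative metric `ρ_Y` of a compact connected C⁰-submanifold with
nonempty boundary is finite and is a metric on `Y`, then any two points of `Y` are joined
by a shortest curve `γ : [0,L] → Y` in `ρ_Y`, i.e. `ρ_Y(γ(s),γ(t)) = t - s`. -/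
theorem statement2 {X : Type*} [MetricSpace X] {n : ℕ} (hn : 2 ≤ n) [NeZero n]
    [ChartedSpace (EuclideanSpace ℝ (Fin n)) X] [IsManifold (𝓡 n) (⊤ : ℕ∞) X]
    [ConnectedSpace X]
    (hX : ∀ x y : X, edist x y = infPathLength Set.univ x y)
    (Y : Set X) [ChartedSpace (EuclideanHalfSpace n) Y]
    (hYcpt : IsCompact Y) (hYconn : IsConnected Y) (hbd : (frontier Y).Nonempty)
    (hfin : ∀ x ∈ Y, ∀ y ∈ Y, relMetric Y x y < ⊤)
    (hmet : IsMetricOn (relMetric Y) Y) :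
    ∀ x ∈ Y, ∀ y ∈ Y, ∃ γ : ℝ → X,
      let L := (relMetric Y x y).toReal
      ContinuousOn γ (Set.Icc 0 L) ∧ (∀ t ∈ Set.Icc (0:ℝ) L, γ t ∈ Y) ∧
      γ 0 = x ∧ γ L = y ∧
      ∀ s t : ℝ, 0 ≤ s → s < t → t ≤ L →
        relMetric Y (γ s) (γ t) = ENNReal.ofReal (t - s) := by
  intro x hx y hy
  classical
  obtain ⟨hm0, hmsep, hmsym, hmtri⟩ := hmet
  set S : Set X := interior Y with hSdef
  have hDdef : relMetric Y = relMetricVia S := rfl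
  have hSY : S ⊆ Y := interior_subset
  have hzero : ∀ p ∈ Y, relMetricVia S p p = 0 := by
    intro p hp; rw [← hDdef]; exact hm0 p hp
  have hsep : ∀ p ∈ Y, ∀ q ∈ Y, relMetricVia S p q = 0 → p = q := by
    intro p hp q hq h; exact hmsep p hp q hq (by rw [hDdef]; exact h)
  have htri : ∀ p ∈ Y, ∀ q ∈ Y, ∀ r ∈ Y,
      relMetricVia S p r ≤ relMetricVia S p q + relMetricVia S q r := by
    intro p hp q hq r hr; rw [← hDdef]; exact hmtri p hp q hq r hr
  have hE : ∀ a b : X, edist a b ≤ infPathLength S a b := by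
    intro a b
    rw [hX a b]
    apply iInf_le_iInf_of_subset
    intro γ hγ
    exact ⟨hγ.1, fun t _ => Set.mem_univ _, hγ.2.2.1, hγ.2.2.2⟩
  have hedist : ∀ a b : X, edist a b ≤ relMetricVia S a b := edist_le_relMetricVia hE
  set L : ℝ≥0∞ := relMetricVia S x y with hLdef
  have hLtop : L ≠ ⊤ := by
    have := hfin x hx y hy
    rw [hDdef] at this
    exact this.ne
  by_cases hL0 : L = 0
  · have hxy : x = y := hsep x hx y hy hL0
    refine ⟨fun _ => x, ?_⟩
    intro Lr
    have hLr : Lr = L.toReal := rfl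
    refine ⟨continuousOn_const, fun t _ => hx, rfl, hxy, ?_⟩
    intro s t hs hst htL
    exfalso
    rw [hLr, hL0] at htL
    simp only [ENNReal.toReal_zero] at htL
    linarith
  · -- midpoints
    have midEx : ∀ p q : X, ∃ mm : X, p ∈ Y → q ∈ Y →
        mm ∈ Y ∧ relMetricVia S p mm ≤ relMetricVia S p q / 2 ∧
          relMetricVia S mm q ≤ relMetricVia S p q / 2 := by
      intro p q
      by_cases h : p ∈ Y ∧ q ∈ Y
      · have hfin' : relMetricVia S p q ≠ ⊤ := by
          have := hfin p h.1 q h.2; rw [hDdef] at this; exact this.ne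
        obtain ⟨mm, h1, h2, h3⟩ := exists_midpoint hSY hYcpt hfin'
        exact ⟨mm, fun _ _ => ⟨h1, h2, h3⟩⟩
      · exact ⟨p, fun hp hq => absurd ⟨hp, hq⟩ h⟩
    choose mid midP using midEx
    set base : ℕ → X := fun j => if j = 0 then x else y with hbase
    set step : (ℕ → X) → (ℕ → X) :=
      fun g j => if j % 2 = 0 then g (j / 2) else mid (g (j / 2)) (g (j / 2 + 1)) with hstepd
    set G : ℕ → ℕ → X := fun n => step^[n] base with hG
    have hGsucc : ∀ n, G (n + 1) = step (G n) := by
      intro n; rw [hG]; exact Function.iterate_succ_apply' step n base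
    have hstep_even : ∀ g i, step g (2 * i) = g i := by
      intro g i
      have h1 : 2 * i % 2 = 0 := by omega
      have h2 : 2 * i / 2 = i := by omega
      simp only [hstepd]
      rw [if_pos h1, h2]
    have hstep_odd : ∀ g i, step g (2 * i + 1) = mid (g i) (g (i + 1)) := by
      intro g i
      have h1 : ¬((2 * i + 1) % 2 = 0) := by omega
      have h2 : (2 * i + 1) / 2 = i := by omega
      simp only [hstepd]
      rw [if_neg h1, h2]
    have hdd : ∀ (c : ℝ≥0∞) (k : ℕ), c / 2^k / 2 = c / 2^(k+1) := by
      intro c k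
      rw [div_eq_mul_inv, div_eq_mul_inv, div_eq_mul_inv, mul_assoc,
        ← ENNReal.mul_inv (Or.inl (pow_ne_zero k two_ne_zero))
          (Or.inl (ENNReal.pow_ne_top ENNReal.ofNat_ne_top)), ← pow_succ]
    have hP : ∀ m : ℕ, (G m 0 = x ∧ (∀ j, 2^m ≤ j → G m j = y)) ∧ (∀ j, G m j ∈ Y) ∧
        (∀ j, relMetricVia S (G m j) (G m (j + 1)) ≤ L / 2^m) := by
      intro m
      induction m with
      | zero =>
        have hGb : G 0 = base := rfl
        refine ⟨⟨?_, ?_⟩, ?_, ?_⟩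
        · rw [hGb]; simp [hbase]
        · intro j hj; rw [hGb]; simp only [hbase]; rw [if_neg (by omega)]
        · intro j; rw [hGb]; simp only [hbase]; split
          · exact hx
          · exact hy
        · intro j
          rw [hGb]
          simp only [hbase]
          rcases Nat.eq_zero_or_pos j with rfl | hj
          · rw [if_pos rfl, if_neg (by omega)]
            rw [pow_zero, div_one]
          · rw [if_neg (by omega), if_neg (by omega)]
            rw [hzero y hy]
            exact zero_le
      | succ k ih =>
        obtain ⟨⟨h0, hyy⟩, hmem, hD⟩ := ih
        have hpow : (2:ℕ)^(k+1) = 2 * 2^k := by ring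
        have hmidyy : mid y y = y := by
          have hmp := midP y y hy hy
          have hz : relMetricVia S y (mid y y) = 0 := le_antisymm (by
            have h' := hmp.2.1
            rwa [hzero y hy, ENNReal.zero_div] at h') zero_le
          exact (hsep y hy (mid y y) hmp.1 hz).symm
        refine ⟨⟨?_, ?_⟩, ?_, ?_⟩
        · rw [hGsucc k]
          have h' := hstep_even (G k) 0
          rw [mul_zero] at h'
          rw [h', h0]
        · intro j hj
          rw [hGsucc k]
          rw [hpow] at hj
          rcases Nat.even_or_odd j with ⟨i, rfl⟩ | ⟨i, rfl⟩
          · rw [← two_mul, hstep_even]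
            exact hyy i (by omega)
          · rw [hstep_odd]
            rw [hyy i (by omega), hyy (i+1) (by omega)]
            exact hmidyy
        · intro j
          rw [hGsucc k]
          rcases Nat.even_or_odd j with ⟨i, rfl⟩ | ⟨i, rfl⟩
          · rw [← two_mul, hstep_even]; exact hmem i
          · rw [hstep_odd]; exact (midP _ _ (hmem i) (hmem (i+1))).1
        · intro j
          rw [hGsucc k]
          rcases Nat.even_or_odd j with ⟨i, rfl⟩ | ⟨i, rfl⟩
          · rw [← two_mul, hstep_even, hstep_odd]
            refine ((midP _ _ (hmem i) (hmem (i+1))).2.1).trans ?_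
            rw [← hdd L k]
            exact ENNReal.div_le_div_right (hD i) 2
          · have h2 : 2*i+1+1 = 2*(i+1) := by ring
            rw [hstep_odd, h2, hstep_even]
            refine ((midP _ _ (hmem i) (hmem (i+1))).2.2).trans ?_
            rw [← hdd L k]
            exact ENNReal.div_le_div_right (hD i) 2
    have chain : ∀ m i k, relMetricVia S (G m i) (G m (i + k)) ≤ (k : ℝ≥0∞) * (L / 2^m) := by
      intro m i k
      induction k with
      | zero => simp [hzero _ ((hP m).2.1 i)]
      | succ k ih =>
        have hidx : i + (k+1) = (i+k)+1 := by ring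
        have htr' := htri (G m i) ((hP m).2.1 _) (G m (i+k)) ((hP m).2.1 _)
          (G m ((i+k)+1)) ((hP m).2.1 _)
        rw [hidx]
        refine (htr'.trans (add_le_add ih ((hP m).2.2 (i+k)))).trans ?_
        rw [Nat.cast_succ, add_mul, one_mul]
    have hfloor : ∀ (t : ℝ) (m : ℕ), 2 * ⌊t * 2^m⌋₊ ≤ ⌊t * 2^(m+1)⌋₊ ∧
        ⌊t * 2^(m+1)⌋₊ ≤ 2 * ⌊t * 2^m⌋₊ + 1 := by
      intro t m
      rcases le_or_gt t 0 with ht | ht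
      · have h1 : t * 2^m ≤ 0 := mul_nonpos_of_nonpos_of_nonneg ht (by positivity)
        have h2 : t * 2^(m+1) ≤ 0 := mul_nonpos_of_nonpos_of_nonneg ht (by positivity)
        rw [Nat.floor_of_nonpos h1, Nat.floor_of_nonpos h2]
        omega
      · have hs0 : (0:ℝ) ≤ t * 2^m := by positivity
        have heq : t * 2^(m+1) = (t * 2^m) * 2 := by ring
        constructor
        · apply Nat.le_floor
          push_cast
          rw [heq]
          have := Nat.floor_le hs0
          linarith
        · have h3 : ⌊t * 2^(m+1)⌋₊ < 2 * ⌊t * 2^m⌋₊ + 2 := by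
            rw [Nat.floor_lt (by positivity : (0:ℝ) ≤ t * 2^(m+1))]
            push_cast
            rw [heq]
            have := Nat.lt_floor_add_one (t * 2^m)
            linarith
          omega
    set aseq : ℝ → ℕ → X := fun t m => G m ⌊t * 2^m⌋₊ with haseq
    have hconsist : ∀ m j, G (m+1) (2*j) = G m j := by
      intro m j; rw [hGsucc m, hstep_even]
    have hcauchy : ∀ (t : ℝ) (m : ℕ), edist (aseq t m) (aseq t (m+1)) ≤ L / 2^m := by
      intro t m
      obtain ⟨hf1, hf2⟩ := hfloor t m
      have h1 : aseq t m = G (m+1) (2*⌊t*2^m⌋₊) := by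
        simp only [haseq]; rw [hconsist]
      have hk : ⌊t*2^(m+1)⌋₊ = 2*⌊t*2^m⌋₊ + (⌊t*2^(m+1)⌋₊ - 2*⌊t*2^m⌋₊) := by omega
      have hch := chain (m+1) (2*⌊t*2^m⌋₊) (⌊t*2^(m+1)⌋₊ - 2*⌊t*2^m⌋₊)
      rw [← hk] at hch
      have hkle : ((⌊t*2^(m+1)⌋₊ - 2*⌊t*2^m⌋₊ : ℕ) : ℝ≥0∞) ≤ 1 := by
        have : ⌊t*2^(m+1)⌋₊ - 2*⌊t*2^m⌋₊ ≤ 1 := by omega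
        exact_mod_cast this
      calc edist (aseq t m) (aseq t (m+1))
          = edist (G (m+1) (2*⌊t*2^m⌋₊)) (G (m+1) ⌊t*2^(m+1)⌋₊) := by rw [h1]
        _ ≤ relMetricVia S (G (m+1) (2*⌊t*2^m⌋₊)) (G (m+1) ⌊t*2^(m+1)⌋₊) := hedist _ _
        _ ≤ ((⌊t*2^(m+1)⌋₊ - 2*⌊t*2^m⌋₊ : ℕ) : ℝ≥0∞) * (L / 2^(m+1)) := hch
        _ ≤ 1 * (L / 2^(m+1)) := mul_le_mul_left hkle _
        _ = L / 2^(m+1) := one_mul _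
        _ ≤ L / 2^m := by rw [← hdd L m]; exact ENNReal.half_le_self
    have hlimex : ∀ t : ℝ, ∃ z ∈ Y, Tendsto (aseq t) atTop (𝓝 z) := by
      intro t
      apply cauchySeq_tendsto_of_isComplete hYcpt.isComplete (fun m => (hP m).2.1 _)
      exact cauchySeq_of_edist_le_geometric_two L hLtop (hcauchy t)
    choose γ hγY hγT using hlimex
    have hγ0 : γ 0 = x := by
      have h0 : aseq 0 = fun m => x := by
        funext m
        simp only [haseq, zero_mul, Nat.floor_zero]
        exact (hP m).1.1
      exact tendsto_nhds_unique (hγT 0) (by rw [h0]; exact tendsto_const_nhds)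
    have hγ1 : γ 1 = y := by
      have h1 : aseq 1 = fun m => y := by
        funext m
        simp only [haseq, one_mul]
        have hc : ((2:ℝ))^m = ((2^m : ℕ) : ℝ) := by push_cast; ring
        rw [hc, Nat.floor_natCast]
        exact (hP m).1.2 _ le_rfl
      exact tendsto_nhds_unique (hγT 1) (by rw [h1]; exact tendsto_const_nhds)
    have hupper : ∀ s t : ℝ, 0 ≤ s → s ≤ t → t ≤ 1 →
        relMetricVia S (γ s) (γ t) ≤ L * ENNReal.ofReal (t - s) := by
      intro s t hs hst ht1
      have ht0 : (0:ℝ) ≤ t := hs.trans hst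
      apply relMetricVia_le_of_tendsto (hγT s) (hγT t)
        (c := fun m => L * ENNReal.ofReal (t - s) + L / 2^m)
      · intro m
        have hfl : ⌊s * 2^m⌋₊ ≤ ⌊t * 2^m⌋₊ :=
          Nat.floor_le_floor (mul_le_mul_of_nonneg_right hst (by positivity))
        have hij : ⌊s * 2^m⌋₊ + (⌊t * 2^m⌋₊ - ⌊s * 2^m⌋₊) = ⌊t * 2^m⌋₊ := by omega
        have hch := chain m ⌊s * 2^m⌋₊ (⌊t * 2^m⌋₊ - ⌊s * 2^m⌋₊)
        rw [hij] at hch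
        refine hch.trans ?_
        have hreal : ((⌊t * 2^m⌋₊ - ⌊s * 2^m⌋₊ : ℕ):ℝ) ≤ (t - s)*2^m + 1 := by
          have h1 : ((⌊t * 2^m⌋₊:ℕ):ℝ) ≤ t * 2^m := Nat.floor_le (by positivity)
          have h2 : s * 2^m < (⌊s * 2^m⌋₊:ℝ) + 1 := Nat.lt_floor_add_one _
          rw [Nat.cast_sub hfl]
          linarith
        have hnneg : (0:ℝ) ≤ (t-s)*2^m :=
          mul_nonneg (sub_nonneg.2 hst) (by positivity)
        have hcancel : (2:ℝ≥0∞)^m * (L / 2^m) = L :=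
          ENNReal.mul_div_cancel (pow_ne_zero m two_ne_zero)
            (ENNReal.pow_ne_top ENNReal.ofNat_ne_top)
        calc ((⌊t * 2^m⌋₊ - ⌊s * 2^m⌋₊ : ℕ):ℝ≥0∞) * (L/2^m)
            = ENNReal.ofReal ((⌊t * 2^m⌋₊ - ⌊s * 2^m⌋₊ : ℕ):ℝ) * (L/2^m) := by
              rw [ENNReal.ofReal_natCast]
          _ ≤ ENNReal.ofReal ((t-s)*2^m + 1) * (L/2^m) :=
              mul_le_mul_left (ENNReal.ofReal_le_ofReal hreal) _
          _ = (ENNReal.ofReal ((t-s)*2^m) + 1) * (L/2^m) := by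
              rw [ENNReal.ofReal_add hnneg zero_le_one, ENNReal.ofReal_one]
          _ = ENNReal.ofReal ((t-s)*2^m) * (L/2^m) + L/2^m := by rw [add_mul, one_mul]
          _ = L * ENNReal.ofReal (t - s) + L/2^m := by
              congr 1
              rw [ENNReal.ofReal_mul (sub_nonneg.2 hst)]
              have h2n : ENNReal.ofReal ((2:ℝ)^m) = (2:ℝ≥0∞)^m := by
                rw [ENNReal.ofReal_pow (by norm_num : (0:ℝ) ≤ 2)]
                norm_num
              rw [h2n, mul_assoc, hcancel, mul_comm]
      · have hpow0 : Tendsto (fun m : ℕ => L / 2^m) atTop (𝓝 0) := by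
          have h2 : Tendsto (fun m : ℕ => ((2:ℝ≥0∞))⁻¹ ^ m) atTop (𝓝 0) :=
            ENNReal.tendsto_pow_atTop_nhds_zero_of_lt_one
              (by rw [ENNReal.inv_lt_one]; exact one_lt_two)
          have h3 := ENNReal.Tendsto.const_mul h2 (Or.inr hLtop)
          rw [mul_zero] at h3
          have he : (fun m : ℕ => L / 2^m) = fun m : ℕ => L * ((2:ℝ≥0∞))⁻¹ ^ m := by
            funext m; rw [div_eq_mul_inv, ENNReal.inv_pow]
          rw [he]
          exact h3
        have h4 := (tendsto_const_nhds (x := L * ENNReal.ofReal (t-s))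
          (f := atTop (α := ℕ))).add hpow0
        simpa using h4
    have hlower : ∀ s t : ℝ, 0 ≤ s → s ≤ t → t ≤ 1 →
        L * ENNReal.ofReal (t - s) ≤ relMetricVia S (γ s) (γ t) := by
      intro s t hs hst ht1
      have h1 : relMetricVia S x (γ s) ≤ L * ENNReal.ofReal s := by
        have h' := hupper 0 s le_rfl hs (hst.trans ht1)
        rwa [hγ0, sub_zero] at h'
      have h2 : relMetricVia S (γ t) y ≤ L * ENNReal.ofReal (1 - t) := by
        have h' := hupper t 1 (hs.trans hst) ht1 le_rfl
        rwa [hγ1] at h'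
      have htr : L ≤ relMetricVia S x (γ s) +
          (relMetricVia S (γ s) (γ t) + relMetricVia S (γ t) y) := by
        calc L = relMetricVia S x y := hLdef
          _ ≤ relMetricVia S x (γ s) + relMetricVia S (γ s) y := htri x hx (γ s) (hγY s) y hy
          _ ≤ _ := add_le_add_right (htri (γ s) (hγY s) (γ t) (hγY t) y hy) _
      have hC : L * ENNReal.ofReal s + L * ENNReal.ofReal (1 - t) ≠ ⊤ :=
        ENNReal.add_ne_top.2 ⟨ENNReal.mul_ne_top hLtop ENNReal.ofReal_ne_top,
          ENNReal.mul_ne_top hLtop ENNReal.ofReal_ne_top⟩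
      have hsum : L * ENNReal.ofReal (t - s) +
          (L * ENNReal.ofReal s + L * ENNReal.ofReal (1 - t)) = L := by
        rw [← mul_add, ← mul_add, ← ENNReal.ofReal_add hs (by linarith : (0:ℝ) ≤ 1 - t),
          ← ENNReal.ofReal_add (by linarith : (0:ℝ) ≤ t - s) (by linarith)]
        have hone : t - s + (s + (1 - t)) = 1 := by ring
        rw [hone, ENNReal.ofReal_one, mul_one]
      have hle : L * ENNReal.ofReal (t - s) +
          (L * ENNReal.ofReal s + L * ENNReal.ofReal (1 - t)) ≤
          relMetricVia S (γ s) (γ t) +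
          (L * ENNReal.ofReal s + L * ENNReal.ofReal (1 - t)) := by
        rw [hsum]
        refine htr.trans ?_
        calc relMetricVia S x (γ s) +
            (relMetricVia S (γ s) (γ t) + relMetricVia S (γ t) y)
            ≤ L * ENNReal.ofReal s +
              (relMetricVia S (γ s) (γ t) + L * ENNReal.ofReal (1 - t)) :=
              add_le_add h1 (add_le_add_right h2 _)
          _ = relMetricVia S (γ s) (γ t) +
              (L * ENNReal.ofReal s + L * ENNReal.ofReal (1 - t)) := by ring
      exact (ENNReal.add_le_add_iff_right hC).1 hle
    have hexact : ∀ s t : ℝ, 0 ≤ s → s ≤ t → t ≤ 1 →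
        relMetricVia S (γ s) (γ t) = L * ENNReal.ofReal (t - s) :=
      fun s t hs hst ht1 => le_antisymm (hupper s t hs hst ht1) (hlower s t hs hst ht1)
    have hLip : LipschitzOnWith L.toNNReal γ (Set.Icc 0 1) := by
      intro s hs t ht
      have key : ∀ s' t' : ℝ, s' ∈ Set.Icc (0:ℝ) 1 → t' ∈ Set.Icc (0:ℝ) 1 → s' ≤ t' →
          edist (γ s') (γ t') ≤ L.toNNReal * edist s' t' := by
        intro s' t' hs' ht' h
        calc edist (γ s') (γ t') ≤ relMetricVia S (γ s') (γ t') := hedist _ _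
          _ = L * ENNReal.ofReal (t' - s') := hexact s' t' hs'.1 h ht'.2
          _ ≤ L.toNNReal * edist s' t' := by
              rw [ENNReal.coe_toNNReal hLtop, edist_dist, Real.dist_eq]
              exact mul_le_mul_right (ENNReal.ofReal_le_ofReal
                (by rw [abs_sub_comm]; exact le_abs_self _)) _
      rcases le_total s t with h | h
      · exact key s t hs ht h
      · rw [edist_comm, edist_comm s t]
        exact key t s ht hs h
    have hcont : ContinuousOn γ (Set.Icc 0 1) := hLip.continuousOn
    set L' : ℝ := L.toReal with hL'
    have hL'pos : 0 < L' := ENNReal.toReal_pos hL0 hLtop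
    refine ⟨fun u => γ (u / L'), ?_⟩
    intro Lr
    have hLr : Lr = L' := rfl
    refine ⟨?_, ?_, ?_, ?_, ?_⟩
    · rw [hLr]
      apply hcont.comp ((continuous_id.div_const L').continuousOn)
      intro u hu
      exact ⟨div_nonneg hu.1 hL'pos.le, (div_le_one hL'pos).2 hu.2⟩
    · intro u _
      exact hγY _
    · show γ (0 / L') = x
      rw [zero_div, hγ0]
    · show γ (Lr / L') = y
      rw [hLr, div_self hL'pos.ne', hγ1]
    · intro s t hs hst htL
      rw [hLr] at htL
      have hb1 : 0 ≤ s / L' := div_nonneg hs hL'pos.le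
      have hb2 : s / L' ≤ t / L' := (div_le_div_iff_of_pos_right hL'pos).2 hst.le
      have hb3 : t / L' ≤ 1 := (div_le_one hL'pos).2 htL
      show relMetric Y (γ (s/L')) (γ (t/L')) = ENNReal.ofReal (t - s)
      rw [hDdef, hexact _ _ hb1 hb2 hb3]
      have hsub : t / L' - s / L' = (t - s)/L' := by ring
      have hLof : L = ENNReal.ofReal L' := by rw [hL', ENNReal.ofReal_toReal hLtop]
      rw [hsub, hLof, ← ENNReal.ofReal_mul hL'pos.le]
      congr 1
      field_simp
end
end

section
/- There exists a 2-dimensional compact connected C⁰-submanifold Y of the Euclidean plane ℝ² with nonempty boundary, and a boundary point O ∈ ∂Y, such that ρ_Y(O,E) = ∞ for every E ∈ Y \ {O}; i.e., condition (i) of finiteness of the relative metric can fail for C⁰-submanifolds. -/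
open Set Filter Topology Manifold ENNReal EuclideanGeometry

noncomputable section

namespace Rem21

abbrev Pl := EuclideanSpace ℝ (Fin 2)

def mk2 (a b : ℝ) : Pl := (EuclideanSpace.equiv (Fin 2) ℝ).symm ![a, b]

@[simp] lemma mk2_apply0 (a b : ℝ) : mk2 a b 0 = a := rfl
@[simp] lemma mk2_apply1 (a b : ℝ) : mk2 a b 1 = b := rfl

lemma continuous_mk2 {α : Type*} [TopologicalSpace α] {g h : α → ℝ} (hg : Continuous g) (hh : Continuous h) :
    Continuous (fun t => mk2 (g t) (h t)) := by
  refine ((EuclideanSpace.equiv (Fin 2) ℝ).symm.continuous).comp (continuous_pi ?_)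
  intro i; fin_cases i <;> simpa

lemma pl_ext {p q : Pl} (h0 : p 0 = q 0) (h1 : p 1 = q 1) : p = q := by
  ext i; fin_cases i <;> assumption

lemma dist_pl (x y : Pl) : dist x y = Real.sqrt ((x 0 - y 0)^2 + (x 1 - y 1)^2) := by
  rw [EuclideanSpace.dist_eq]
  simp [Fin.sum_univ_two, Real.dist_eq, sq_abs]

lemma abs_sub_le_dist1 (x y : Pl) : |x 1 - y 1| ≤ dist x y := by
  rw [dist_pl, ← Real.sqrt_sq_eq_abs]
  exact Real.sqrt_le_sqrt (by nlinarith [sq_nonneg (x 0 - y 0)])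

/-- the oscillating function -/
def f (x : ℝ) : ℝ := Real.sqrt (Real.sqrt x) * Real.sin x⁻¹

lemma f_cont : Continuous f := by
  rw [continuous_iff_continuousAt]
  intro x
  rcases eq_or_ne x 0 with rfl | hx
  · have hf0 : f 0 = 0 := by simp [f]
    rw [ContinuousAt, hf0]
    apply squeeze_zero_norm (a := fun t => Real.sqrt (Real.sqrt t))
    · intro t
      rw [f, Real.norm_eq_abs, abs_mul, abs_of_nonneg (Real.sqrt_nonneg _)]
      calc Real.sqrt (Real.sqrt t) * |Real.sin t⁻¹|
          ≤ Real.sqrt (Real.sqrt t) * 1 := by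
            apply mul_le_mul_of_nonneg_left _ (Real.sqrt_nonneg _)
            exact abs_le.2 ⟨Real.neg_one_le_sin _, Real.sin_le_one _⟩
        _ = Real.sqrt (Real.sqrt t) := mul_one _
    · have : Continuous fun t : ℝ => Real.sqrt (Real.sqrt t) :=
        Real.continuous_sqrt.comp Real.continuous_sqrt
      have h := this.tendsto 0
      simpa using h
  · apply ContinuousAt.mul
    · exact (Real.continuous_sqrt.comp Real.continuous_sqrt).continuousAt
    · exact ContinuousAt.comp (g := Real.sin) (f := fun t : ℝ => t⁻¹)
        Real.continuous_sin.continuousAt (continuousAt_inv₀ hx)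

lemma f_zero : f 0 = 0 := by simp [f]

/-- center of the annulus -/
def cc : Pl := mk2 1 0

/-- the closed annulus -/
def A : Set Pl := {p | 1/2 ≤ dist p cc ∧ dist p cc ≤ 1}

/-- the squeezing shear -/
def Ψ (p : Pl) : Pl := mk2 (p 0) (p 0 * p 1 + f (p 0))

lemma Ψ_cont : Continuous Ψ := by
  show Continuous fun p : Pl => mk2 (p 0) (p 0 * p 1 + f (p 0))
  apply continuous_mk2 ((EuclideanSpace.proj (𝕜 := ℝ) (0 : Fin 2)).continuous)
  exact (((EuclideanSpace.proj (𝕜 := ℝ) (0 : Fin 2)).continuous).mul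
    ((EuclideanSpace.proj (𝕜 := ℝ) (1 : Fin 2)).continuous)).add
    (f_cont.comp ((EuclideanSpace.proj (𝕜 := ℝ) (0 : Fin 2)).continuous))

def Y : Set Pl := Ψ '' A

def O : Pl := mk2 0 0

lemma memA_iff (p : Pl) : p ∈ A ↔ 1/2 ≤ dist p cc ∧ dist p cc ≤ 1 := Iff.rfl

lemma distcc (p : Pl) : dist p cc = Real.sqrt ((p 0 - 1)^2 + (p 1)^2) := by
  rw [dist_pl]; simp [cc]

lemma memA_bounds {p : Pl} (hp : p ∈ A) :
    0 ≤ p 0 ∧ p 0 ≤ 2 ∧ |p 1| ≤ 1 := by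
  obtain ⟨-, h2⟩ := hp
  rw [distcc] at h2
  have h2' : (p 0 - 1)^2 + (p 1)^2 ≤ 1 := by
    have := Real.sqrt_le_sqrt (le_of_eq (Real.sqrt_one).symm)
    nlinarith [Real.sq_sqrt (by positivity : (0:ℝ) ≤ (p 0 - 1)^2 + (p 1)^2),
      Real.sqrt_nonneg ((p 0 - 1)^2 + (p 1)^2)]
  refine ⟨by nlinarith [sq_nonneg (p 1)], by nlinarith [sq_nonneg (p 1)], ?_⟩
  rw [abs_le]; constructor <;> nlinarith [sq_nonneg (p 0 - 1)]

lemma memA_zero {p : Pl} (hp : p ∈ A) (h0 : p 0 = 0) : p = O := by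
  obtain ⟨-, h2⟩ := hp
  rw [distcc, h0] at h2
  have h2' : (0 - 1:ℝ)^2 + (p 1)^2 ≤ 1 := by
    nlinarith [Real.sq_sqrt (by positivity : (0:ℝ) ≤ (0 - 1:ℝ)^2 + (p 1)^2),
      Real.sqrt_nonneg ((0-1:ℝ)^2 + (p 1)^2)]
  have : p 1 = 0 := by nlinarith [sq_nonneg (p 1)]
  exact pl_ext (by simpa [O] using h0) (by simpa [O] using this)

lemma O_memA : O ∈ A := by
  constructor <;> rw [distcc] <;> simp [O] <;> norm_num

lemma Ψ_O : Ψ O = O := by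
  apply pl_ext <;> simp [Ψ, O, f_zero]

lemma Ψ_injOn : Set.InjOn Ψ A := by
  intro p hp q hq h
  have h0 : p 0 = q 0 := by
    have := congrArg (fun z : Pl => z 0) h; simpa [Ψ] using this
  have h1 : p 0 * p 1 + f (p 0) = q 0 * q 1 + f (q 0) := by
    have := congrArg (fun z : Pl => z 1) h; simpa [Ψ] using this
  rcases eq_or_lt_of_le (memA_bounds hp).1 with hz | hpos
  · rw [memA_zero hp hz.symm, memA_zero hq (by rw [← h0, ← hz])]
  · apply pl_ext h0
    rw [← h0] at h1
    have : p 0 * p 1 = p 0 * q 1 := by linarith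
    exact mul_left_cancel₀ (ne_of_gt hpos) this

/-- width bound for points of Y -/
lemma memY_bounds {q : Pl} (hq : q ∈ Y) :
    0 ≤ q 0 ∧ q 0 ≤ 2 ∧ |q 1 - f (q 0)| ≤ q 0 := by
  obtain ⟨p, hp, rfl⟩ := hq
  obtain ⟨h0, h2, h1⟩ := memA_bounds hp
  refine ⟨by simpa [Ψ], by simpa [Ψ], ?_⟩
  have : (Ψ p) 1 - f ((Ψ p) 0) = p 0 * p 1 := by simp [Ψ]
  rw [this]
  simp only [Ψ, mk2_apply0]
  rw [abs_mul, abs_of_nonneg h0]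
  nlinarith [abs_nonneg (p 1)]

lemma A_compact : IsCompact A := by
  have hclosed : IsClosed A := by
    have : A = (fun p => dist p cc) ⁻¹' (Icc (1/2) 1) := rfl
    rw [this]
    exact IsClosed.preimage (Continuous.dist continuous_id continuous_const) isClosed_Icc
  exact (isCompact_closedBall cc 1).of_isClosed_subset hclosed (fun p hp => hp.2)

lemma Y_compact : IsCompact Y := A_compact.image Ψ_cont

def sph : Set Pl := Metric.sphere (0 : Pl) 1

/-- parametrization of the annulus -/
def par (r : ℝ) (u : Pl) : Pl := cc + r • u

lemma A_eq_image : A = (fun ru : ℝ × Pl => par ru.1 ru.2) '' ((Icc (1/2:ℝ) 1) ×ˢ sph) := by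
  ext p
  constructor
  · rintro ⟨h1, h2⟩
    have hrpos : (0:ℝ) < dist p cc := lt_of_lt_of_le (by norm_num) h1
    refine ⟨⟨dist p cc, (dist p cc)⁻¹ • (p - cc)⟩, ⟨⟨h1, h2⟩, ?_⟩, ?_⟩
    · rw [sph, mem_sphere_zero_iff_norm, norm_smul, norm_inv, Real.norm_eq_abs,
        abs_of_pos hrpos, ← dist_eq_norm]
      exact inv_mul_cancel₀ (ne_of_gt hrpos)
    · show cc + dist p cc • (dist p cc)⁻¹ • (p - cc) = p
      rw [smul_smul, mul_inv_cancel₀ (ne_of_gt hrpos), one_smul]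
      abel
  · rintro ⟨⟨r, u⟩, ⟨⟨hr1, hr2⟩, hu⟩, rfl⟩
    rw [sph, mem_sphere_zero_iff_norm] at hu
    have : dist (par r u) cc = r := by
      rw [par, dist_eq_norm, add_sub_cancel_left, norm_smul, hu, mul_one,
        Real.norm_eq_abs, abs_of_nonneg (by linarith)]
    rw [memA_iff, this]
    exact ⟨hr1, hr2⟩

lemma A_connected : IsConnected A := by
  rw [A_eq_image]
  apply IsConnected.image
  · apply IsConnected.prod
    · exact isConnected_Icc (by norm_num)
    · apply isConnected_sphere ?_ (0:Pl) (by norm_num : (0:ℝ) ≤ 1)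
      rw [← Module.finrank_eq_rank]
      norm_cast
      rw [finrank_euclideanSpace_fin]
      norm_num
  · apply Continuous.continuousOn
    exact continuous_const.add (continuous_fst.smul continuous_snd)

lemma Y_connected : IsConnected Y := A_connected.image Ψ (Ψ_cont.continuousOn)

lemma O_memY : O ∈ Y := ⟨O, O_memA, Ψ_O⟩

lemma Y_subset_half : Y ⊆ {p : Pl | 0 ≤ p 0} := fun q hq => (memY_bounds hq).1

lemma O_frontier : O ∈ frontier Y := by
  constructor
  · exact subset_closure O_memY
  · intro hmem
    rw [mem_interior_iff_mem_nhds] at hmem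
    have : {p : Pl | 0 ≤ p 0} ∈ 𝓝 O := Filter.mem_of_superset hmem Y_subset_half
    have hg : Continuous (fun t : ℝ => mk2 t 0) :=
      continuous_mk2 continuous_id continuous_const
    have : (fun t : ℝ => mk2 t 0) ⁻¹' {p : Pl | 0 ≤ p 0} ∈ 𝓝 (0:ℝ) := by
      apply hg.continuousAt.preimage_mem_nhds
      show {p : Pl | 0 ≤ p 0} ∈ 𝓝 (mk2 0 0)
      exact this
    have hIci : Ici (0:ℝ) ∈ 𝓝 (0:ℝ) := by
      apply Filter.mem_of_superset this
      intro t ht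
      simpa using ht
    have := mem_interior_iff_mem_nhds.2 hIci
    rw [interior_Ici] at this
    exact lt_irrefl (0:ℝ) this


/-! ### Charted space structure -/

def mk1 (t : ℝ) : EuclideanSpace ℝ (Fin 1) := (EuclideanSpace.equiv (Fin 1) ℝ).symm ![t]

lemma mk1_eval (x : EuclideanSpace ℝ (Fin 1)) : mk1 (x 0) = x := by
  ext i; fin_cases i; rfl

def modelHomeo : (ModelProd (EuclideanHalfSpace 1) (EuclideanSpace ℝ (Fin 1))) ≃ₜ
    EuclideanHalfSpace 2 where
  toFun q := ⟨mk2 (q.1.1 0) (q.2 0), q.1.2⟩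
  invFun x := (⟨mk1 (x.1 0), by simpa [mk1] using x.2⟩, mk1 (x.1 1))
  left_inv q := by
    ext
    · exact congrFun (congrArg WithLp.ofLp (mk1_eval q.1.1)) _
    · exact congrFun (congrArg WithLp.ofLp (mk1_eval q.2)) _
  right_inv x := by
    apply Subtype.ext
    ext i; fin_cases i <;> rfl
  continuous_toFun := by
    apply Continuous.subtype_mk
    show Continuous fun q : (EuclideanHalfSpace 1) × (EuclideanSpace ℝ (Fin 1)) =>
      mk2 (q.1.1 0) (q.2 0)
    refine ((EuclideanSpace.equiv (Fin 2) ℝ).symm.continuous).comp (continuous_pi ?_)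
    intro i
    have h1 : Continuous fun q : (EuclideanHalfSpace 1) × (EuclideanSpace ℝ (Fin 1)) => q.1.1 0 :=
      (EuclideanSpace.proj (𝕜 := ℝ) (0 : Fin 1)).continuous.comp
        (continuous_subtype_val.comp continuous_fst)
    have h2 : Continuous fun q : (EuclideanHalfSpace 1) × (EuclideanSpace ℝ (Fin 1)) => q.2 0 :=
      (EuclideanSpace.proj (𝕜 := ℝ) (0 : Fin 1)).continuous.comp continuous_snd
    fin_cases i <;> simpa
  continuous_invFun := by
    have hmk1 : Continuous mk1 := by
      refine ((EuclideanSpace.equiv (Fin 1) ℝ).symm.continuous).comp (continuous_pi ?_)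
      intro i; fin_cases i; simpa using continuous_id'
    have h0 : Continuous fun x : EuclideanHalfSpace 2 => x.1 0 :=
      (EuclideanSpace.proj (𝕜 := ℝ) (0 : Fin 2)).continuous.comp continuous_subtype_val
    have h1 : Continuous fun x : EuclideanHalfSpace 2 => x.1 1 :=
      (EuclideanSpace.proj (𝕜 := ℝ) (1 : Fin 2)).continuous.comp continuous_subtype_val
    exact ((hmk1.comp h0).subtype_mk _).prodMk (hmk1.comp h1)

def transferModel {M H H' : Type*} [TopologicalSpace M] [TopologicalSpace H] [TopologicalSpace H']
    (φ : H ≃ₜ H') (cs : ChartedSpace H M) : ChartedSpace H' M where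
  atlas := Set.range fun x : M => (cs.chartAt x).trans φ.toOpenPartialHomeomorph
  chartAt x := (cs.chartAt x).trans φ.toOpenPartialHomeomorph
  mem_chart_source x := by
    simp [OpenPartialHomeomorph.trans_source, cs.mem_chart_source]
  chart_mem_atlas x := ⟨x, rfl⟩

def transferCharted {M N H : Type*} [TopologicalSpace M] [TopologicalSpace N] [TopologicalSpace H]
    (φ : M ≃ₜ N) (cs : ChartedSpace H N) : ChartedSpace H M where
  atlas := Set.range fun x : M => φ.toOpenPartialHomeomorph.trans (cs.chartAt (φ x))
  chartAt x := φ.toOpenPartialHomeomorph.trans (cs.chartAt (φ x))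
  mem_chart_source x := by
    simp [OpenPartialHomeomorph.trans_source, cs.mem_chart_source]
  chart_mem_atlas x := ⟨x, rfl⟩

def parS (ru : (Icc (1/2:ℝ) 1) × (Metric.sphere (0:Pl) 1)) : ↥A :=
  ⟨par ru.1.1 ru.2.1, by
    rw [A_eq_image]
    exact ⟨(ru.1.1, ru.2.1), ⟨ru.1.2, ru.2.2⟩, rfl⟩⟩

lemma parS_bijective : Function.Bijective parS := by
  constructor
  · rintro ⟨⟨r, hr⟩, ⟨u, hu⟩⟩ ⟨⟨r', hr'⟩, ⟨u', hu'⟩⟩ h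
    have h' : par r u = par r' u' := congrArg Subtype.val h
    rw [par, par] at h'
    have hru : r • u = r' • u' := by
      have := sub_eq_zero.2 h'
      rw [add_sub_add_left_eq_sub] at this
      exact sub_eq_zero.1 this
    have hu1 : ‖u‖ = 1 := by simpa using hu
    have hu'1 : ‖u'‖ = 1 := by simpa using hu'
    have hrpos : (0:ℝ) < r := lt_of_lt_of_le (by norm_num) hr.1
    have hr'pos : (0:ℝ) < r' := lt_of_lt_of_le (by norm_num) hr'.1
    have hnorm : r = r' := by
      have := congrArg norm hru
      rw [norm_smul, norm_smul, hu1, hu'1, Real.norm_eq_abs, Real.norm_eq_abs,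
        abs_of_pos hrpos, abs_of_pos hr'pos] at this
      simpa using this
    subst hnorm
    have : u = u' := smul_right_injective Pl (ne_of_gt hrpos) hru
    simp [Prod.ext_iff, Subtype.ext_iff, this]
  · rintro ⟨a, ha⟩
    rw [A_eq_image] at ha
    obtain ⟨⟨r, u⟩, ⟨hr, hu⟩, hra⟩ := ha
    exact ⟨(⟨r, hr⟩, ⟨u, hu⟩), Subtype.ext hra⟩

lemma parS_cont : Continuous parS := by
  apply Continuous.subtype_mk
  exact continuous_const.add
    ((continuous_subtype_val.comp continuous_fst).smul (continuous_subtype_val.comp continuous_snd))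

def e₂ : ((Icc (1/2:ℝ) 1) × (Metric.sphere (0:Pl) 1)) ≃ₜ ↥A :=
  @Continuous.homeoOfEquivCompactToT2 _ _ _ _ _ _ (Equiv.ofBijective parS parS_bijective) parS_cont

def ΨS (a : ↥A) : ↥Y := ⟨Ψ a.1, Set.mem_image_of_mem _ a.2⟩

lemma ΨS_bijective : Function.Bijective ΨS := by
  constructor
  · rintro ⟨a, ha⟩ ⟨b, hb⟩ h
    exact Subtype.ext (Ψ_injOn ha hb (congrArg Subtype.val h))
  · rintro ⟨y, hy⟩
    obtain ⟨a, ha, rfl⟩ := hy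
    exact ⟨⟨a, ha⟩, rfl⟩

instance : CompactSpace ↥A := isCompact_iff_compactSpace.1 A_compact

def e₁ : ↥A ≃ₜ ↥Y :=
  @Continuous.homeoOfEquivCompactToT2 _ _ _ _ _ _ (Equiv.ofBijective ΨS ΨS_bijective)
    ((Ψ_cont.comp continuous_subtype_val).subtype_mk _)

def csY : ChartedSpace (EuclideanHalfSpace 2) ↥Y :=
  haveI : Fact ((1:ℝ)/2 < 1) := ⟨by norm_num⟩
  transferCharted ((e₂.trans e₁).symm) (transferModel modelHomeo (by infer_instance))


/-! ### Quantitative oscillation lemmas -/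

def ssq (x : ℝ) : ℝ := Real.sqrt (Real.sqrt x)

lemma ssq_nonneg (x : ℝ) : 0 ≤ ssq x := Real.sqrt_nonneg _

lemma ssq_mono {x y : ℝ} (h : x ≤ y) : ssq x ≤ ssq y :=
  Real.sqrt_le_sqrt (Real.sqrt_le_sqrt h)

lemma ssq_pow4 {t : ℝ} (ht : 0 ≤ t) : ssq (t^4) = t := by
  rw [ssq]
  have : (t^4) = (t^2)^2 := by ring
  rw [this, Real.sqrt_sq (by positivity), Real.sqrt_sq ht]

lemma pow4_ssq {x : ℝ} (hx : 0 ≤ x) : (ssq x)^4 = x := by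
  rw [ssq]
  have : (Real.sqrt (Real.sqrt x))^4 = ((Real.sqrt (Real.sqrt x))^2)^2 := by ring
  rw [this, Real.sq_sqrt (Real.sqrt_nonneg x), Real.sq_sqrt hx]

lemma four_mul_le_ssq {x : ℝ} (hx : 0 ≤ x) (hx8 : x ≤ 1/8) : 4 * x ≤ ssq x := by
  have ht : 0 ≤ ssq x := ssq_nonneg x
  have h4 : (ssq x)^4 = x := pow4_ssq hx
  nlinarith [sq_nonneg (ssq x), sq_nonneg (ssq x - 1/2), sq_nonneg ((ssq x)^2 - 1/4)]

def θk (k : ℕ) : ℝ := Real.pi/2 + k * Real.pi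

def xk (k : ℕ) : ℝ := (θk k)⁻¹

lemma θk_pos (k : ℕ) : 0 < θk k := by
  have := Real.pi_pos
  have : (0:ℝ) ≤ k * Real.pi := by positivity
  unfold θk; linarith [Real.pi_pos]

lemma xk_pos (k : ℕ) : 0 < xk k := inv_pos.2 (θk_pos k)

lemma θk_mono {k m : ℕ} (h : k ≤ m) : θk k ≤ θk m := by
  unfold θk
  have : (k:ℝ) ≤ m := Nat.cast_le.2 h
  nlinarith [Real.pi_pos]

lemma xk_anti {k m : ℕ} (h : k ≤ m) : xk m ≤ xk k :=
  inv_anti₀ (θk_pos k) (θk_mono h)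

lemma xk_le_of_three {k : ℕ} (hk : 3 ≤ k) : xk k ≤ 1/8 := by
  have h1 : xk k ≤ xk 3 := xk_anti hk
  have h2 : xk 3 ≤ 1/8 := by
    have h8 : (8:ℝ) ≤ θk 3 := by
      rw [θk]; push_cast; nlinarith [Real.pi_gt_three]
    have := inv_anti₀ (by norm_num : (0:ℝ) < 8) h8
    rw [xk]; linarith [this]
  linarith

lemma inv_xk (k : ℕ) : (xk k)⁻¹ = θk k := inv_inv _

lemma f_xk (k : ℕ) : f (xk k) = (-1)^k * ssq (xk k) := by
  rw [f, inv_xk, θk]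
  rw [show Real.pi/2 + k * Real.pi = Real.pi/2 + k * Real.pi from rfl]
  rw [Real.sin_add_nat_mul_pi, Real.sin_pi_div_two, mul_one, ssq, mul_comm]

/-- consecutive oscillation forcing -/
lemma jump {k : ℕ} (hk : 3 ≤ k) {y y' : ℝ}
    (hy : |y - f (xk k)| ≤ xk k) (hy' : |y' - f (xk (k+1))| ≤ xk (k+1)) :
    ssq (xk (k+1)) ≤ |y' - y| := by
  set s := ssq (xk k) with hs
  set s' := ssq (xk (k+1)) with hs'
  have hss : s' ≤ s := ssq_mono (xk_anti (Nat.le_succ k))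
  have hs0 : 0 ≤ s' := ssq_nonneg _
  have h4 : 4 * xk k ≤ s := four_mul_le_ssq (xk_pos k).le (xk_le_of_three hk)
  have h4' : 4 * xk (k+1) ≤ s' :=
    four_mul_le_ssq (xk_pos _).le (xk_le_of_three (hk.trans (Nat.le_succ k)))
  have hxk0 : 0 < xk k := xk_pos k
  have hxk0' : 0 < xk (k+1) := xk_pos (k+1)
  rw [f_xk] at hy hy'
  rcases Nat.even_or_odd k with he | ho
  · rw [he.neg_one_pow, one_mul] at hy
    rw [(he.add_one).neg_one_pow, neg_one_mul] at hy'
    rw [abs_le] at hy hy'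
    rw [abs_sub_comm, le_abs]
    left
    linarith [hy.1, hy'.2]
  · rw [ho.neg_one_pow, neg_one_mul] at hy
    rw [(ho.add_one).neg_one_pow, one_mul] at hy'
    rw [abs_le] at hy hy'
    rw [le_abs]
    left
    linarith [hy.2, hy'.1]


/-! ### Lower bound on variation of paths in Y -/

lemma path_bound {K₀ K : ℕ} (hK₀ : 3 ≤ K₀) (hK : K₀ ≤ K) {γ : ℝ → Pl}
    (hc : ContinuousOn γ (Icc 0 1)) (hYmem : ∀ t ∈ Icc (0:ℝ) 1, γ t ∈ Y)
    (h0 : γ 0 0 ≤ xk K) (h1 : xk K₀ ≤ γ 1 0) :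
    ENNReal.ofReal (((K - K₀ : ℕ) : ℝ) * ssq (xk K)) ≤ eVariationOn γ (Set.Icc 0 1) := by
  set g : ℝ → ℝ := fun t => γ t 0 with hgdef
  have hg : ContinuousOn g (Icc 0 1) :=
    ((EuclideanSpace.proj (𝕜 := ℝ) (0 : Fin 2)).continuous).comp_continuousOn hc
  set J := K - K₀ with hJ
  have hJK : ∀ j, j ≤ J → K₀ ≤ K - j ∧ K - j ≤ K := by
    intro j hj
    constructor
    · omega
    · omega
  -- construct monotone sample times
  have exT : ∀ j : ℕ, j ≤ J → ∃ t : ℕ → ℝ, Monotone t ∧ (∀ i, t i ∈ Icc (0:ℝ) 1) ∧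
      (∀ i, g (t i) = xk (K - min i j)) := by
    intro j
    induction j with
    | zero =>
      intro _
      have hmem : xk K ∈ Icc (g 0) (g 1) := by
        constructor
        · exact h0
        · exact le_trans (xk_anti hK) h1
      obtain ⟨t0, ht0, hgt0⟩ := intermediate_value_Icc (by norm_num : (0:ℝ) ≤ 1) hg hmem
      exact ⟨fun _ => t0, monotone_const, fun _ => ht0, fun i => by simpa using hgt0⟩
    | succ j ih =>
      intro hj1
      obtain ⟨t, hm, hIcc, hval⟩ := ih (Nat.le_of_succ_le hj1)
      have hgtj : g (t j) = xk (K - j) := by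
        have := hval j
        rwa [min_self] at this
      have hkk : K - j = (K - (j+1)) + 1 := by omega
      have hmem : xk (K - (j+1)) ∈ Icc (g (t j)) (g 1) := by
        constructor
        · rw [hgtj, hkk]
          exact xk_anti (Nat.le_succ _)
        · exact le_trans (xk_anti (hJK (j+1) hj1).1) h1
      have htj01 : t j ∈ Icc (0:ℝ) 1 := hIcc j
      obtain ⟨t', ht'mem, hgt'⟩ := intermediate_value_Icc htj01.2
        (hg.mono (Icc_subset_Icc htj01.1 le_rfl)) hmem
      refine ⟨fun i => if i ≤ j then t i else t', ?_, ?_, ?_⟩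
      · intro a b hab
        by_cases ha : a ≤ j <;> by_cases hb : b ≤ j <;> simp only [ha, hb, if_true, if_false]
        · exact hm hab
        · exact le_trans (hm (by omega : a ≤ j)) ht'mem.1
        · omega
        · exact le_rfl
      · intro i
        by_cases hi : i ≤ j <;> simp only [hi, if_true, if_false]
        · exact hIcc i
        · exact ⟨le_trans htj01.1 ht'mem.1, ht'mem.2⟩
      · intro i
        by_cases hi : i ≤ j <;> simp only [hi, if_true, if_false]
        · rw [min_eq_left (by omega : i ≤ j + 1)]
          have := hval i
          rwa [min_eq_left hi] at this
        · rw [min_eq_right (by omega : j + 1 ≤ i)]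
          exact hgt'
  obtain ⟨t, hm, hIcc, hval⟩ := exT J le_rfl
  have hsum := eVariationOn.sum_le (f := γ) (s := Icc (0:ℝ) 1) (n := J) hm hIcc
  refine le_trans ?_ hsum
  have hterm : ∀ i ∈ Finset.range J, ENNReal.ofReal (ssq (xk K)) ≤
      edist (γ (t (i+1))) (γ (t i)) := by
    intro i hi
    rw [Finset.mem_range] at hi
    have hiJ : i ≤ J := hi.le
    have hi1J : i + 1 ≤ J := hi
    have hgi : g (t i) = xk (K - i) := by
      have := hval i; rwa [min_eq_left hiJ] at this
    have hgi1 : g (t (i+1)) = xk (K - (i+1)) := by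
      have := hval (i+1); rwa [min_eq_left hi1J] at this
    -- width bounds from membership in Y
    have hYi := memY_bounds (hYmem (t i) (hIcc i))
    have hYi1 := memY_bounds (hYmem (t (i+1)) (hIcc (i+1)))
    have hwi : |γ (t i) 1 - f (xk (K - i))| ≤ xk (K - i) := by
      have := hYi.2.2
      rwa [show γ (t i) 0 = g (t i) from rfl, hgi] at this
    have hwi1 : |γ (t (i+1)) 1 - f (xk (K - (i+1)))| ≤ xk (K - (i+1)) := by
      have := hYi1.2.2
      rwa [show γ (t (i+1)) 0 = g (t (i+1)) from rfl, hgi1] at this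
    have hkk : K - i = (K - (i+1)) + 1 := by omega
    have hk3 : 3 ≤ K - (i+1) := le_trans hK₀ (by omega)
    rw [hkk] at hwi
    have hj := jump hk3 hwi1 (y' := γ (t i) 1) hwi
    rw [← hkk] at hj
    -- from coordinate jump to edist
    have hd : ssq (xk K) ≤ dist (γ (t (i+1))) (γ (t i)) := by
      have h1' : |γ (t (i+1)) 1 - γ (t i) 1| ≤ dist (γ (t (i+1))) (γ (t i)) :=
        abs_sub_le_dist1 _ _
      have h2' : ssq (xk K) ≤ ssq (xk (K - i)) := ssq_mono (xk_anti (by omega))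
      have h3' : ssq (xk (K - i)) ≤ |γ (t i) 1 - γ (t (i+1)) 1| := hj
      rw [abs_sub_comm] at h3'
      linarith
    rw [edist_dist]
    exact ENNReal.ofReal_le_ofReal hd
  calc ENNReal.ofReal ((J : ℝ) * ssq (xk K))
      = (J : ℝ≥0∞) * ENNReal.ofReal (ssq (xk K)) := by
        rw [ENNReal.ofReal_mul (by positivity), ENNReal.ofReal_natCast]
    _ = ∑ _i ∈ Finset.range J, ENNReal.ofReal (ssq (xk K)) := by
        rw [Finset.sum_const, nsmul_eq_mul, Finset.card_range]
    _ ≤ ∑ i ∈ Finset.range J, edist (γ (t (i+1))) (γ (t i)) :=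
        Finset.sum_le_sum hterm


/-! ### Numerics -/

lemma ssq_xk_ge {N : ℕ} (hN : 2 ≤ N) : 1/(2*(N:ℝ)) ≤ ssq (xk (N^4)) := by
  have hNR : (2:ℝ) ≤ N := by exact_mod_cast hN
  have hK2 : (2:ℝ) ≤ ((N^4 : ℕ) : ℝ) := by
    have : 2 ≤ N^4 := le_trans hN (Nat.le_self_pow (by norm_num) N)
    exact_mod_cast this
  have hθ : θk (N^4) ≤ 4 * ((N^4 : ℕ) : ℝ) := by
    rw [θk]
    nlinarith [Real.pi_lt_d2, Real.pi_pos]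
  have hxk : (4 * ((N^4:ℕ):ℝ))⁻¹ ≤ xk (N^4) := by
    apply inv_anti₀ (θk_pos _) hθ
  have hcast : ((N^4 : ℕ) : ℝ) = (N:ℝ)^4 := by push_cast; ring
  have hpow : (1/(2*(N:ℝ)))^4 ≤ (4 * ((N^4:ℕ):ℝ))⁻¹ := by
    rw [hcast]
    rw [div_pow, one_pow]
    rw [show (2*(N:ℝ))^4 = 16 * (N:ℝ)^4 by ring]
    rw [one_div, inv_le_inv₀ (by nlinarith) (by nlinarith)]
    nlinarith
  have := ssq_mono (le_trans hpow hxk)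
  rwa [ssq_pow4 (by positivity)] at this

lemma numeric (n K₀ : ℕ) (hK₀ : 3 ≤ K₀) :
    (n:ℝ) ≤ ((((K₀ + 2*n + 2)^4 - K₀ : ℕ)) : ℝ) * ssq (xk ((K₀ + 2*n + 2)^4)) := by
  set N := K₀ + 2*n + 2 with hN
  have hN2 : 2 ≤ N := by omega
  have hKK₀ : K₀ ≤ N^4 := le_trans (by omega) (Nat.le_self_pow (by norm_num) N)
  have hcast : ((N^4 - K₀ : ℕ) : ℝ) = (N:ℝ)^4 - K₀ := by
    rw [Nat.cast_sub hKK₀]; push_cast; ring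
  have hssq := ssq_xk_ge hN2
  have hNR : (2:ℝ) ≤ (N:ℝ) := by exact_mod_cast hN2
  have hK₀R : (K₀:ℝ) ≤ (N:ℝ) := by
    have : K₀ ≤ N := by omega
    exact_mod_cast this
  have hnR : (N:ℝ) ≥ 2*(n:ℝ) + 2 := by
    have : 2*n + 2 ≤ N := by omega
    exact_mod_cast this
  have h1 : (n:ℝ) ≤ ((N:ℝ)^4 - K₀) * (1/(2*(N:ℝ))) := by
    rw [mul_one_div, le_div_iff₀ (by linarith)]
    nlinarith [sq_nonneg ((N:ℝ) - 1), sq_nonneg ((N:ℝ) + 1), (Nat.cast_nonneg n : (0:ℝ) ≤ (n:ℝ))]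
  calc (n:ℝ) ≤ ((N:ℝ)^4 - K₀) * (1/(2*(N:ℝ))) := h1
    _ ≤ ((N:ℝ)^4 - K₀) * ssq (xk (N^4)) := by
        apply mul_le_mul_of_nonneg_left hssq
        nlinarith
    _ = (((N^4 - K₀ : ℕ)) : ℝ) * ssq (xk (N^4)) := by rw [hcast]

/-! ### The relative metric is infinite -/

lemma relMetric_top : ∀ E ∈ Y \ {O}, relMetric Y O E = ⊤ := by
  rintro E ⟨hEY, hEO⟩
  obtain ⟨e, heA, rfl⟩ := hEY
  have heO : e ≠ O := by
    intro h
    exact hEO (by rw [h, Ψ_O]; exact rfl)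
  have hepos : 0 < e 0 := by
    rcases ((memA_bounds heA).1).lt_or_eq with h | h
    · exact h
    · exact absurd (memA_zero heA h.symm) heO
  set ε := e 0 with hε
  have hΨe0 : (Ψ e) 0 = ε := by simp [Ψ, hε]
  rw [relMetric, relMetricVia, eq_top_iff, ← ENNReal.iSup_natCast]
  apply iSup_le
  intro n
  set K₀ := max 3 (Nat.ceil (2/ε)) with hK₀def
  have hK₀3 : 3 ≤ K₀ := le_max_left _ _
  have hxK₀ : xk K₀ < ε/2 := by
    have hceil : (2/ε : ℝ) ≤ K₀ := by
      have hle : Nat.ceil (2/ε) ≤ K₀ := le_max_right _ _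
      calc (2/ε : ℝ) ≤ (Nat.ceil (2/ε) : ℝ) := Nat.le_ceil _
        _ ≤ (K₀ : ℝ) := Nat.cast_le.2 hle
    have hθgt : 2/ε < θk K₀ := by
      rw [θk]
      nlinarith [Real.pi_gt_three, (Nat.cast_nonneg K₀ : (0:ℝ) ≤ K₀)]
    have h2ε : (0:ℝ) < 2/ε := by positivity
    have := inv_strictAnti₀ h2ε hθgt
    rw [xk]
    calc (θk K₀)⁻¹ < (2/ε)⁻¹ := this
      _ = ε/2 := by field_simp
  set N := K₀ + 2*n + 2 with hNdef
  set K := N^4 with hKdef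
  have hK₀K : K₀ ≤ K := le_trans (by omega) (Nat.le_self_pow (by norm_num) N)
  refine Filter.le_liminf_of_le (by isBoundedDefault) ?_
  have hproj : Continuous fun p : Pl => p 0 :=
    (EuclideanSpace.proj (𝕜 := ℝ) (0 : Fin 2)).continuous
  have hU : {p : Pl | p 0 < xk K} ∈ 𝓝[interior Y] O := by
    apply mem_nhdsWithin_of_mem_nhds
    apply (isOpen_Iio.preimage hproj).mem_nhds
    show O 0 < xk K
    simp only [O, mk2_apply0]
    exact xk_pos K
  have hV : {p : Pl | ε/2 < p 0} ∈ 𝓝[interior Y] (Ψ e) := by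
    apply mem_nhdsWithin_of_mem_nhds
    apply (isOpen_Ioi.preimage hproj).mem_nhds
    show ε/2 < (Ψ e) 0
    rw [hΨe0]; linarith
  apply Filter.eventually_of_mem (Filter.prod_mem_prod hU hV)
  rintro ⟨u, v⟩ ⟨hu, hv⟩
  show (n : ℝ≥0∞) ≤ infPathLength (interior Y) u v
  rw [infPathLength]
  refine le_iInf₂ ?_
  rintro γ ⟨hcont, hmem, hγ0, hγ1⟩
  have hYmem : ∀ t ∈ Icc (0:ℝ) 1, γ t ∈ Y := fun t ht => interior_subset (hmem t ht)
  have h0' : γ 0 0 ≤ xk K := by rw [hγ0]; exact le_of_lt hu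
  have h1' : xk K₀ ≤ γ 1 0 := by
    rw [hγ1]
    have : ε/2 < v 0 := hv
    linarith
  have hb := path_bound hK₀3 hK₀K hcont hYmem h0' h1'
  refine le_trans ?_ hb
  rw [show ((n:ℝ≥0∞)) = ENNReal.ofReal (n:ℝ) from (ENNReal.ofReal_natCast n).symm]
  exact ENNReal.ofReal_le_ofReal (numeric n K₀ hK₀3)

end Rem21






/-- Remark 2.1: there is a 2-dimensional compact connected C⁰-submanifold `Y` of the
Euclidean plane with nonempty boundary and a boundary point `O` with `ρ_Y(O,E) = ∞` for
all `E ∈ Y \ {O}`; i.e. the finiteness condition (i) may fail. -/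
theorem statement10 :
    ∃ Y : Set (EuclideanSpace ℝ (Fin 2)),
      IsCompact Y ∧ IsConnected Y ∧
      Nonempty (ChartedSpace (EuclideanHalfSpace 2) Y) ∧
      (frontier Y).Nonempty ∧
      ∃ O ∈ frontier Y, ∀ E ∈ Y \ {O}, relMetric Y O E = ⊤ :=
  ⟨Rem21.Y, Rem21.Y_compact, Rem21.Y_connected, ⟨Rem21.csY⟩, ⟨Rem21.O, Rem21.O_frontier⟩,
    Rem21.O, Rem21.O_frontier, Rem21.relMetric_top⟩
end
end

section
/- Let A, D be points in ℝ² with |A| = |D| = 1 and angle AOD = π/6 at the origin O. For j ∈ ℕ let R_j = {x ∈ 4ΔAOD : |x| ∈ [4·2^{−j}, 8·2^{−j}]} be the annular layers of the dilated triangle. Then for any continuous curve γ : [0,1] → 4ΔAOD with γ(0)=A, γ(1)=D and γ(]0,1[) ⊆ Int(4ΔAOD), there exists j₀ ∈ ℕ such that the set Φ_{j₀} of angular coordinates of points of γ lying in R_{j₀} has 1-dimensional Hausdorff measure at least 2^{−j₀}·π/6. -/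
open Set Filter Topology Manifold ENNReal EuclideanGeometry

noncomputable section

/-- The layer/angular-measure estimate from the proof of Theorem 2.2: for a curve `γ`
from `A` to `D` inside the dilated triangle `4ΔAOD` (interior points in its interior),
there is a layer `R_{j₀} = {x ∈ 4ΔAOD : |x| ∈ [4·2^{-j₀}, 8·2^{-j₀}]}` in which the set of
angular coordinates of points of `γ` has Hausdorff 1-measure at least `2^{-j₀}·π/6`. -/
theorem statement13 (A D : EuclideanSpace ℝ (Fin 2))
    (hA : ‖A‖ = 1) (hD : ‖D‖ = 1)
    (hAD : ∠ A (0 : EuclideanSpace ℝ (Fin 2)) D = Real.pi / 6)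
    (T4 : Set (EuclideanSpace ℝ (Fin 2)))
    (hT4 : T4 = convexHull ℝ {0, (4:ℝ) • A, (4:ℝ) • D})
    (R : ℕ → Set (EuclideanSpace ℝ (Fin 2)))
    (hR : ∀ j, R j = {x ∈ T4 | ‖x‖ ∈ Set.Icc (4 * (1/2:ℝ)^j) (8 * (1/2:ℝ)^j)})
    (γ : ℝ → EuclideanSpace ℝ (Fin 2))
    (hγc : ContinuousOn γ (Set.Icc 0 1)) (hγ0 : γ 0 = A) (hγ1 : γ 1 = D)
    (hγT : ∀ t ∈ Set.Icc (0:ℝ) 1, γ t ∈ T4)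
    (hγint : ∀ t ∈ Set.Ioo (0:ℝ) 1, γ t ∈ interior T4)
    (Φ : ℕ → Set ℝ)
    (hΦ : ∀ j, Φ j = {θ : ℝ | ∃ t ∈ Set.Icc (0:ℝ) 1, γ t ∈ R j ∧
      θ = ∠ A (0 : EuclideanSpace ℝ (Fin 2)) (γ t)}) :
    ∃ j₀ : ℕ, ENNReal.ofReal ((1/2:ℝ)^j₀ * (Real.pi / 6)) ≤
      MeasureTheory.Measure.hausdorffMeasure 1 (Φ j₀) := by
  have hA0 : A ≠ 0 := by intro h; rw [h, norm_zero] at hA; norm_num at hA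
  have hD0 : D ≠ 0 := by intro h; rw [h, norm_zero] at hD; norm_num at hD
  -- angle to inner product
  have hangle : ∀ x : EuclideanSpace ℝ (Fin 2),
      ∠ A (0 : EuclideanSpace ℝ (Fin 2)) x = InnerProductGeometry.angle A x := by
    intro x
    simp [EuclideanGeometry.angle, vsub_eq_sub, sub_zero]
  have hinnerAD : (0:ℝ) ≤ inner ℝ A D := by
    have := InnerProductGeometry.cos_angle A D
    rw [← hangle D, hAD, hA, hD] at this
    have h6 : Real.cos (Real.pi / 6) = Real.sqrt 3 / 2 := Real.cos_pi_div_six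
    have : (inner ℝ A D : ℝ) = Real.sqrt 3 / 2 := by
      rw [h6] at this; field_simp at this ⊢; linarith
    rw [this]
    positivity
  -- T4 in halfspace
  have hhalf : ∀ x ∈ T4, (0:ℝ) ≤ inner ℝ (A + D) x := by
    rw [hT4]
    intro x hx
    have hconv : Convex ℝ {w : EuclideanSpace ℝ (Fin 2) | (0:ℝ) ≤ inner ℝ (A + D) w} :=
      convex_halfSpace_ge ⟨fun a b => inner_add_right _ _ _, fun c a => real_inner_smul_right _ _ _⟩ 0
    refine convexHull_min ?_ hconv hx
    rintro y (rfl | rfl | rfl)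
    · simp
    · simp only [mem_setOf_eq, real_inner_smul_right, inner_add_left]
      have : (inner ℝ A A : ℝ) = 1 := by rw [real_inner_self_eq_norm_sq, hA]; norm_num
      have h2 : (inner ℝ D A : ℝ) = inner ℝ A D := real_inner_comm _ _
      nlinarith
    · simp only [mem_setOf_eq, real_inner_smul_right, inner_add_left]
      have : (inner ℝ D D : ℝ) = 1 := by rw [real_inner_self_eq_norm_sq, hD]; norm_num
      nlinarith
  have hADne : A + D ≠ 0 := by
    intro h
    have : (inner ℝ (A+D) A : ℝ) = 0 := by rw [h, inner_zero_left]
    rw [inner_add_left, real_inner_self_eq_norm_sq, hA] at this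
    have h2 : (inner ℝ D A : ℝ) = inner ℝ A D := real_inner_comm _ _
    nlinarith
  -- 0 not in interior T4
  have h0int : (0 : EuclideanSpace ℝ (Fin 2)) ∉ interior T4 := by
    intro h
    rw [mem_interior_iff_mem_nhds, Metric.mem_nhds_iff] at h
    obtain ⟨ε, hε, hball⟩ := h
    set v : EuclideanSpace ℝ (Fin 2) := -((ε / (2 * ‖A + D‖)) • (A + D)) with hv
    have hnv : ‖v‖ < ε := by
      rw [hv, norm_neg, norm_smul]
      have hAD' : 0 < ‖A + D‖ := norm_pos_iff.2 hADne
      rw [Real.norm_eq_abs, abs_of_pos (by positivity)]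
      rw [div_mul_eq_mul_div, mul_comm]
      rw [div_lt_iff₀ (by positivity)]
      nlinarith
    have hvT : v ∈ T4 := hball (by simpa [dist_zero_right] using hnv)
    have := hhalf v hvT
    rw [hv, inner_neg_right, real_inner_smul_right, real_inner_self_eq_norm_sq] at this
    have hAD' : 0 < ‖A + D‖ := norm_pos_iff.2 hADne
    have h5 : 0 < ε / (2 * ‖A + D‖) := by positivity
    nlinarith [mul_pos h5 (mul_pos hAD' hAD')]
  -- T4 bounded by 4
  have hT4b : ∀ x ∈ T4, ‖x‖ ≤ 4 := by
    rw [hT4]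
    intro x hx
    have : x ∈ Metric.closedBall (0 : EuclideanSpace ℝ (Fin 2)) 4 := by
      refine convexHull_min ?_ (convex_closedBall _ _) hx
      rintro y (rfl | rfl | rfl) <;>
        simp [mem_closedBall_zero_iff, norm_smul, hA, hD] <;> norm_num
    simpa [mem_closedBall_zero_iff] using this
  -- gamma never 0
  have hγne : ∀ t ∈ Set.Icc (0:ℝ) 1, γ t ≠ 0 := by
    intro t ht
    rcases eq_or_lt_of_le ht.1 with h0 | h0
    · rw [← h0, hγ0]; exact hA0
    rcases eq_or_lt_of_le ht.2 with h1 | h1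
    · rw [h1, hγ1]; exact hD0
    intro h
    exact h0int (h ▸ hγint t ⟨h0, h1⟩)
  -- the angle function
  set φ : ℝ → ℝ := fun t => ∠ A (0 : EuclideanSpace ℝ (Fin 2)) (γ t) with hφ
  have hφc : ContinuousOn φ (Set.Icc 0 1) := by
    intro t ht
    have h1 : ContinuousAt (fun y : EuclideanSpace ℝ (Fin 2) × EuclideanSpace ℝ (Fin 2) =>
        InnerProductGeometry.angle y.1 y.2) (A, γ t) :=
      InnerProductGeometry.continuousAt_angle hA0 (hγne t ht)
    have h2 : ContinuousWithinAt (fun s => ((A : EuclideanSpace ℝ (Fin 2)), γ s))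
        (Set.Icc 0 1) t := (continuousWithinAt_const).prodMk (hγc t ht)
    have := ContinuousAt.comp_continuousWithinAt (f := fun s => ((A : EuclideanSpace ℝ (Fin 2)), γ s)) h1 h2
    refine this.congr (fun s _ => ?_) ?_ <;> simp [hφ, hangle]
  have hφ0 : φ 0 = 0 := by
    rw [hφ]; simp only [hγ0]
    rw [hangle]; exact InnerProductGeometry.angle_self hA0
  have hφ1 : φ 1 = Real.pi / 6 := by rw [hφ]; simp only [hγ1]; exact hAD
  -- covering
  have hcover : Set.Icc 0 (Real.pi / 6) ⊆ ⋃ i : ℕ, Φ (i + 1) := by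
    intro θ hθ
    have hIVT := intermediate_value_Icc (by norm_num : (0:ℝ) ≤ 1) hφc
    rw [hφ0, hφ1] at hIVT
    obtain ⟨t, ht, htθ⟩ := hIVT hθ
    set r := ‖γ t‖ with hr
    have hrpos : 0 < r := norm_pos_iff.2 (hγne t ht)
    have hrle : r ≤ 4 := hT4b _ (hγT t ht)
    set c : ℝ := 4 / r with hc
    have hc1 : 1 ≤ c := (one_le_div hrpos).2 hrle
    set m : ℕ := ⌊c⌋₊ with hm
    have hm1 : 1 ≤ m := Nat.le_floor (by exact_mod_cast hc1)
    set j : ℕ := Nat.log 2 m + 1 with hj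
    have hup : c ≤ (2:ℝ)^j := by
      have h1 : m < 2 ^ j := Nat.lt_pow_succ_log_self (by norm_num) m
      have h2 : m + 1 ≤ 2 ^ j := h1
      have h3 : c < m + 1 := Nat.lt_floor_add_one c
      have h4 : ((m:ℝ) + 1 : ℝ) ≤ (2:ℝ)^j := by exact_mod_cast h2
      linarith
    have hdown : (2:ℝ)^j ≤ 2 * c := by
      have h1 : 2 ^ Nat.log 2 m ≤ m := Nat.pow_log_le_self 2 (by omega)
      have h2 : (m:ℝ) ≤ c := Nat.floor_le (by linarith)
      have h3 : ((2:ℝ))^(Nat.log 2 m) ≤ m := by exact_mod_cast h1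
      rw [hj, pow_succ]
      nlinarith
    refine mem_iUnion.2 ⟨j - 1, ?_⟩
    have hj1 : j - 1 + 1 = j := by omega
    rw [hj1, hΦ]
    refine ⟨t, ht, ?_, htθ.symm⟩
    rw [hR]
    have hpow : ((1:ℝ)/2)^j = ((2:ℝ)^j)⁻¹ := by
      rw [one_div, inv_pow]
    constructor
    · exact hγT t ht
    have h2j : (0:ℝ) < 2^j := by positivity
    have h4 : (4:ℝ) ≤ r * 2^j := by
      have := hup; rw [hc, div_le_iff₀ hrpos] at this; linarith
    have h8 : r * 2^j ≤ 8 := by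
      have := hdown
      have hc8 : 2 * c = 8 / r := by rw [hc]; ring
      rw [hc8, le_div_iff₀ hrpos] at this; linarith
    refine ⟨?_, ?_⟩
    · rw [hpow, ← div_eq_mul_inv, div_le_iff₀ h2j]; linarith
    · rw [hpow, ← div_eq_mul_inv, le_div_iff₀ h2j]; linarith
  -- measure argument
  by_contra hcon
  push_neg at hcon
  have hpi : (0:ℝ) < Real.pi := Real.pi_pos
  set b : ℕ → ℝ≥0∞ := fun i => ENNReal.ofReal ((1/2:ℝ)^(i+1) * (Real.pi / 6)) with hb
  have hsum_b : ∑' i, b i = ENNReal.ofReal (Real.pi / 6) := by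
    have hnn : ∀ i : ℕ, (0:ℝ) ≤ (1/2:ℝ)^(i+1) * (Real.pi / 6) := by
      intro i; positivity
    have hsummable : Summable (fun i : ℕ => (1/2:ℝ)^(i+1) * (Real.pi / 6)) := by
      have : Summable (fun i : ℕ => (1/2:ℝ)^i) :=
        summable_geometric_of_lt_one (by norm_num) (by norm_num)
      exact Summable.congr (this.mul_right ((1/2) * (Real.pi/6))) (fun i => by ring)
    rw [← ENNReal.ofReal_tsum_of_nonneg hnn hsummable]
    congr 1
    have h1 : ∀ i : ℕ, (1/2:ℝ)^(i+1) * (Real.pi / 6) = (1/2:ℝ)^i * (Real.pi / 12) := by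
      intro i; ring
    simp_rw [h1]
    rw [tsum_mul_right, tsum_geometric_of_lt_one (by norm_num) (by norm_num)]
    ring
  have hf_le : ∀ i : ℕ, MeasureTheory.Measure.hausdorffMeasure 1 (Φ (i+1)) ≤ b i :=
    fun i => (hcon (i+1)).le
  have hf_lt : MeasureTheory.Measure.hausdorffMeasure 1 (Φ (0+1)) < b 0 := hcon 1
  have hsum_f_ne : ∑' i, MeasureTheory.Measure.hausdorffMeasure 1 (Φ (i+1)) ≠ ⊤ := by
    refine ne_top_of_le_ne_top ?_ (ENNReal.tsum_le_tsum hf_le)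
    rw [hsum_b]; exact ENNReal.ofReal_ne_top
  have hstrict := ENNReal.tsum_lt_tsum hsum_f_ne hf_le hf_lt
  rw [hsum_b] at hstrict
  have hchain : ENNReal.ofReal (Real.pi / 6) ≤
      ∑' i, MeasureTheory.Measure.hausdorffMeasure 1 (Φ (i+1)) := by
    calc ENNReal.ofReal (Real.pi / 6)
        = MeasureTheory.Measure.hausdorffMeasure 1 (Set.Icc (0:ℝ) (Real.pi / 6)) := by
          rw [MeasureTheory.hausdorffMeasure_real, Real.volume_Icc]; norm_num
      _ ≤ MeasureTheory.Measure.hausdorffMeasure 1 (⋃ i : ℕ, Φ (i+1)) :=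
          MeasureTheory.measure_mono hcover
      _ ≤ ∑' i, MeasureTheory.Measure.hausdorffMeasure 1 (Φ (i+1)) :=
          MeasureTheory.measure_iUnion_le _
  exact absurd (lt_of_le_of_lt hchain hstrict) (lt_irrefl _)
end
end

section
/- Let K be the solid cone in ℝ³ obtained by rotating the angle ∠AOD = π/6 around the ray OA, and K_{4ΔAOD} the truncated cone obtained by rotating the triangle 4ΔAOD. Any continuous curve γ in K \ {O} joining A and D that is not contained in K_{4ΔAOD} \ {O} has rotational projection meeting the segment [4A, 4D], and hence length at least 2(4 sin(π/3) − 1) = 2(2√3 − 1) > 4. -/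
open Set Filter Topology Manifold ENNReal EuclideanGeometry

noncomputable section

open scoped RealInnerProductSpace

set_option maxHeartbeats 2000000

/-- The escape estimate from the proof of Theorem 2.2: let `K` be the solid cone obtained
by rotating the angle `∠AOD = π/6` about the ray `OA` and `K_{4ΔAOD}` the truncated cone
over the dilated triangle `4ΔAOD`. Any curve in `K \ {O}` from `A` to `D` not contained in
`K_{4ΔAOD} \ {O}` has rotational projection meeting the segment `[4A, 4D]`, and hence has
length at least `2(4·sin(π/3) − 1) = 2(2√3 − 1) > 4`. Here the rotational projection sends
`x` to the point of the half-plane spanned by `A` and the unit vector `w` (coplanar with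
`A, D`, orthogonal to `A`, on the side of `D`) with the same axial component and the same
distance to the axis `OA`. -/
theorem statement15 (A D w : EuclideanSpace ℝ (Fin 3))
    (hA : ‖A‖ = 1) (hD : ‖D‖ = 1)
    (hAD : ∠ A (0 : EuclideanSpace ℝ (Fin 3)) D = Real.pi / 6)
    (hw1 : ‖w‖ = 1) (hw2 : ⟪A, w⟫ = 0)
    (hw3 : w ∈ Submodule.span ℝ ({A, D} : Set (EuclideanSpace ℝ (Fin 3))))
    (hw4 : 0 < ⟪D, w⟫)
    (projRot : EuclideanSpace ℝ (Fin 3) → EuclideanSpace ℝ (Fin 3))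
    (hproj : projRot = fun x => ⟪x, A⟫ • A + ‖x - ⟪x, A⟫ • A‖ • w)
    (K T4 K4 : Set (EuclideanSpace ℝ (Fin 3)))
    (hK : K = insert 0 {x | ∠ A (0 : EuclideanSpace ℝ (Fin 3)) x ≤ Real.pi / 6})
    (hT4 : T4 = convexHull ℝ {0, (4:ℝ) • A, (4:ℝ) • D})
    (hK4 : K4 = {x ∈ K | projRot x ∈ T4})
    (γ : ℝ → EuclideanSpace ℝ (Fin 3))
    (hγc : ContinuousOn γ (Set.Icc 0 1)) (hγ0 : γ 0 = A) (hγ1 : γ 1 = D)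
    (hγK : ∀ t ∈ Set.Icc (0:ℝ) 1, γ t ∈ K ∧ γ t ≠ 0)
    (hout : ∃ t ∈ Set.Icc (0:ℝ) 1, γ t ∉ K4) :
    (∃ t ∈ Set.Icc (0:ℝ) 1, projRot (γ t) ∈ segment ℝ ((4:ℝ) • A) ((4:ℝ) • D)) ∧
    ENNReal.ofReal (2 * (2 * Real.sqrt 3 - 1)) ≤ eVariationOn γ (Set.Icc 0 1) := by
  classical
  -- basic real constants
  have s3sq : Real.sqrt 3 ^ 2 = 3 := Real.sq_sqrt (by norm_num)
  have s3nonneg : (0:ℝ) ≤ Real.sqrt 3 := Real.sqrt_nonneg 3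
  have s3ge1 : (1:ℝ) ≤ Real.sqrt 3 := by nlinarith
  have s3le : Real.sqrt 3 ≤ 7/4 := by nlinarith
  -- inner product of A and D
  have hAD' : InnerProductGeometry.angle A D = Real.pi / 6 := by
    simpa [EuclideanGeometry.angle, vsub_eq_sub, sub_zero] using hAD
  have hADin : ⟪A, D⟫ = Real.sqrt 3 / 2 := by
    have h := InnerProductGeometry.cos_angle A D
    rw [hAD', Real.cos_pi_div_six, hA, hD, mul_one, div_one] at h
    linarith [h]
  have hDAin : ⟪D, A⟫ = Real.sqrt 3 / 2 := by
    rw [real_inner_comm]; exact hADin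
  have hAA : ⟪A, A⟫ = 1 := by
    rw [real_inner_self_eq_norm_sq, hA]; norm_num
  have hDD : ⟪D, D⟫ = 1 := by
    rw [real_inner_self_eq_norm_sq, hD]; norm_num
  -- express w in terms of A and D : w = -√3 • A + 2 • D
  obtain ⟨p, q, hpq⟩ := Submodule.mem_span_pair.mp hw3
  have hwA : p + q * (Real.sqrt 3 / 2) = 0 := by
    have : ⟪A, p • A + q • D⟫ = 0 := by rw [hpq]; exact hw2
    rw [inner_add_right, real_inner_smul_right, real_inner_smul_right, hAA, hADin] at this
    linarith
  have hwD : ⟪D, w⟫ = p * (Real.sqrt 3 / 2) + q := by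
    rw [← hpq, inner_add_right, real_inner_smul_right, real_inner_smul_right, hDAin, hDD]
    ring
  have hwnorm : p^2 + q^2 + p*q*Real.sqrt 3 = 1 := by
    have : ⟪p • A + q • D, p • A + q • D⟫ = 1 := by
      rw [hpq, real_inner_self_eq_norm_sq, hw1]; norm_num
    rw [inner_add_left, inner_add_right, inner_add_right, real_inner_smul_left,
      real_inner_smul_left, real_inner_smul_left, real_inner_smul_left,
      real_inner_smul_right, real_inner_smul_right, real_inner_smul_right,
      real_inner_smul_right, hAA, hDD, hADin, hDAin] at this
    linear_combination this
  have hq : q = 2 := by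
    have hp : p = -(q * (Real.sqrt 3 / 2)) := by linarith
    have hq2 : q^2 = 4 := by
      rw [hp] at hwnorm; linear_combination 4 * hwnorm + q^2 * s3sq
    have hDw' : ⟪D, w⟫ = q / 4 := by
      rw [hwD, hp]; linear_combination (-(q/4)) * s3sq
    have hqpos : 0 < q := by rw [hDw'] at hw4; linarith
    have hfact : (q - 2) * (q + 2) = 0 := by nlinarith
    rcases mul_eq_zero.mp hfact with h | h
    · linarith
    · linarith
  have hp : p = -Real.sqrt 3 := by
    rw [hq] at hwA; linarith
  have hwAD : w = -Real.sqrt 3 • A + (2:ℝ) • D := by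
    rw [← hpq, hp, hq]
  -- basic coordinate facts for points of K \ {0}
  have hpyth : ∀ x : EuclideanSpace ℝ (Fin 3),
      ‖x‖^2 = ⟪x, A⟫^2 + ‖x - ⟪x, A⟫ • A‖^2 := by
    intro x
    have horth : ⟪⟪x, A⟫ • A, x - ⟪x, A⟫ • A⟫ = 0 := by
      rw [inner_sub_right, real_inner_smul_left, real_inner_smul_left,
        real_inner_smul_right, real_inner_comm x A, hAA]
      ring
    have hx : x = ⟪x, A⟫ • A + (x - ⟪x, A⟫ • A) := by abel
    calc ‖x‖^2 = ‖⟪x, A⟫ • A + (x - ⟪x, A⟫ • A)‖^2 := by rw [← hx]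
      _ = ‖⟪x, A⟫ • A‖^2 + 2 * ⟪⟪x, A⟫ • A, x - ⟪x, A⟫ • A⟫ + ‖x - ⟪x, A⟫ • A‖^2 := by
          rw [← norm_add_sq_real]
      _ = ⟪x, A⟫^2 + ‖x - ⟪x, A⟫ • A‖^2 := by
          rw [horth, norm_smul, hA]; simp [sq_abs]
  have hcoord : ∀ x : EuclideanSpace ℝ (Fin 3), x ∈ K → x ≠ 0 →
      Real.sqrt 3 / 2 * ‖x‖ ≤ ⟪x, A⟫ ∧ ‖x - ⟪x, A⟫ • A‖ ≤ ‖x‖ / 2 := by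
    intro x hxK hx0
    have hxn : 0 < ‖x‖ := norm_pos_iff.mpr hx0
    have hang : ∠ A (0 : EuclideanSpace ℝ (Fin 3)) x ≤ Real.pi / 6 := by
      rw [hK] at hxK
      rcases hxK with h | h
      · exact absurd h hx0
      · exact h
    have hang' : InnerProductGeometry.angle A x ≤ Real.pi / 6 := by
      have : ∠ A (0 : EuclideanSpace ℝ (Fin 3)) x = InnerProductGeometry.angle A x := by
        simp [EuclideanGeometry.angle, vsub_eq_sub, sub_zero]
      linarith [this ▸ hang]
    have hcos := Real.cos_le_cos_of_nonneg_of_le_pi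
      (InnerProductGeometry.angle_nonneg A x)
      (by linarith [Real.pi_pos] : Real.pi / 6 ≤ Real.pi) hang'
    rw [Real.cos_pi_div_six, InnerProductGeometry.cos_angle, hA, one_mul] at hcos
    have hin : ⟪A, x⟫ = ⟪x, A⟫ := real_inner_comm x A
    have h1 : Real.sqrt 3 / 2 * ‖x‖ ≤ ⟪x, A⟫ := by
      rw [← hin]
      calc Real.sqrt 3 / 2 * ‖x‖ ≤ (⟪A, x⟫ / ‖x‖) * ‖x‖ := by
            exact mul_le_mul_of_nonneg_right hcos hxn.le
        _ = ⟪A, x⟫ := by field_simp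
    refine ⟨h1, ?_⟩
    have hpy := hpyth x
    have hα0 : (0:ℝ) ≤ ⟪x, A⟫ := le_trans (by positivity) h1
    have hα2 : 3/4 * ‖x‖^2 ≤ ⟪x, A⟫^2 := by
      nlinarith [mul_le_mul h1 h1 (by positivity) hα0, s3sq]
    nlinarith [norm_nonneg (x - ⟪x, A⟫ • A), hxn, hpy, hα2]
  -- the "g" functional
  set g : EuclideanSpace ℝ (Fin 3) → ℝ :=
    fun x => ⟪x, A⟫ + (2 - Real.sqrt 3) * ‖x - ⟪x, A⟫ • A‖ with hg
  have hgcont : Continuous g := by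
    have h1 : Continuous fun x : EuclideanSpace ℝ (Fin 3) => ⟪x, A⟫ :=
      continuous_id.inner continuous_const
    exact h1.add (continuous_const.mul ((continuous_id.sub (h1.smul continuous_const)).norm))
  -- projRot in A, D coordinates
  have hprojAD : ∀ x : EuclideanSpace ℝ (Fin 3),
      projRot x = (⟪x, A⟫ - Real.sqrt 3 * ‖x - ⟪x, A⟫ • A‖) • A
        + (2 * ‖x - ⟪x, A⟫ • A‖) • D := by
    intro x
    rw [hproj]
    simp only []
    rw [hwAD]
    module
  -- membership criterion for T4
  have memT4 : ∀ a b : ℝ, 0 ≤ a → 0 ≤ b → a + b ≤ 4 → a • A + b • D ∈ T4 := by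
    intro a b ha hb hab
    rw [hT4]
    have h0 : (0 : EuclideanSpace ℝ (Fin 3)) ∈ convexHull ℝ
        ({0, (4:ℝ) • A, (4:ℝ) • D} : Set (EuclideanSpace ℝ (Fin 3))) :=
      subset_convexHull ℝ _ (by simp)
    have h4A : (4:ℝ) • A ∈ convexHull ℝ
        ({0, (4:ℝ) • A, (4:ℝ) • D} : Set (EuclideanSpace ℝ (Fin 3))) :=
      subset_convexHull ℝ _ (by simp)
    have h4D : (4:ℝ) • D ∈ convexHull ℝ
        ({0, (4:ℝ) • A, (4:ℝ) • D} : Set (EuclideanSpace ℝ (Fin 3))) :=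
      subset_convexHull ℝ _ (by simp)
    have hcx := convex_convexHull ℝ
      ({0, (4:ℝ) • A, (4:ℝ) • D} : Set (EuclideanSpace ℝ (Fin 3)))
    rcases eq_or_lt_of_le (by linarith : (0:ℝ) ≤ a + b) with hs | hs
    · have ha0 : a = 0 := by linarith
      have hb0 : b = 0 := by linarith
      rw [ha0, hb0]; simpa using h0
    · have hu := hcx h4A h4D (div_nonneg ha hs.le) (div_nonneg hb hs.le)
        (by field_simp)
      have hfin := hcx hu h0 (by positivity : (0:ℝ) ≤ (a+b)/4)
        (by linarith [div_le_one_of_le₀ (by linarith : a+b ≤ 4) (by norm_num : (0:ℝ) ≤ 4)] :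
          (0:ℝ) ≤ 1 - (a+b)/4)
        (by ring)
      have heq : ((a+b)/4) • ((a/(a+b)) • ((4:ℝ) • A) + (b/(a+b)) • ((4:ℝ) • D))
          + (1 - (a+b)/4) • (0 : EuclideanSpace ℝ (Fin 3)) = a • A + b • D := by
        rw [smul_zero, add_zero, smul_add, smul_smul, smul_smul, smul_smul, smul_smul]
        congr 1
        · congr 1; field_simp
        · congr 1; field_simp
      rw [heq] at hfin
      exact hfin
  -- if x ∈ K \ {0} and g x ≤ 4 then projRot x ∈ T4
  have hginT4 : ∀ x : EuclideanSpace ℝ (Fin 3), x ∈ K → x ≠ 0 → g x ≤ 4 → projRot x ∈ T4 := by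
    intro x hxK hx0 hgx
    obtain ⟨h1, h2⟩ := hcoord x hxK hx0
    rw [hprojAD x]
    apply memT4
    · have : 0 < ‖x‖ := norm_pos_iff.mpr hx0
      nlinarith [norm_nonneg (x - ⟪x, A⟫ • A)]
    · positivity
    · rw [hg] at hgx; simp only [] at hgx; linarith
  -- g at the starting point
  have hgA : g A = 1 := by
    rw [hg]; simp only []
    rw [hAA, one_smul, sub_self, norm_zero]
    ring
  -- there is a time where g (γ t) > 4
  obtain ⟨t₁, ht₁, ht₁K4⟩ := hout
  have hgt₁ : 4 < g (γ t₁) := by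
    by_contra h
    push_neg at h
    apply ht₁K4
    rw [hK4]
    exact ⟨(hγK t₁ ht₁).1, hginT4 _ (hγK t₁ ht₁).1 (hγK t₁ ht₁).2 h⟩
  -- intermediate value theorem
  have hsub : Set.Icc (0:ℝ) t₁ ⊆ Set.Icc (0:ℝ) 1 := Set.Icc_subset_Icc le_rfl ht₁.2
  have hcont : ContinuousOn (g ∘ γ) (Set.Icc 0 t₁) :=
    hgcont.comp_continuousOn (hγc.mono hsub)
  have hIVT := intermediate_value_Icc ht₁.1 hcont
  have h4mem : (4:ℝ) ∈ Set.Icc ((g ∘ γ) 0) ((g ∘ γ) t₁) := by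
    constructor
    · show (g ∘ γ) 0 ≤ 4
      simp only [Function.comp_apply, hγ0, hgA]; norm_num
    · exact le_of_lt hgt₁
  obtain ⟨c, hc, hgc⟩ := hIVT h4mem
  have hc1 : c ∈ Set.Icc (0:ℝ) 1 := hsub hc
  -- coordinates at the crossing point
  set x := γ c with hx
  have hxK : x ∈ K := (hγK c hc1).1
  have hx0 : x ≠ 0 := (hγK c hc1).2
  obtain ⟨hxa, hxb⟩ := hcoord x hxK hx0
  have hxn : 0 < ‖x‖ := norm_pos_iff.mpr hx0
  have hgc' : ⟪x, A⟫ + (2 - Real.sqrt 3) * ‖x - ⟪x, A⟫ • A‖ = 4 := hgc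
  have haneg : 0 ≤ ⟪x, A⟫ - Real.sqrt 3 * ‖x - ⟪x, A⟫ • A‖ := by nlinarith
  -- first conclusion: projRot x lies on the segment
  have hseg : projRot x ∈ segment ℝ ((4:ℝ) • A) ((4:ℝ) • D) := by
    rw [hprojAD x]
    refine ⟨(⟪x, A⟫ - Real.sqrt 3 * ‖x - ⟪x, A⟫ • A‖)/4, (2 * ‖x - ⟪x, A⟫ • A‖)/4,
      by linarith, by positivity, by linarith, ?_⟩
    rw [smul_smul, smul_smul]
    congr 1 <;> congr 1 <;> ring
  -- norm lower bound at the crossing point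
  have hxA : ⟪x, A⟫ ≤ ‖x‖ := by
    calc ⟪x, A⟫ ≤ ‖x‖ * ‖A‖ := real_inner_le_norm x A
      _ = ‖x‖ := by rw [hA, mul_one]
  have hnormx : 2 * Real.sqrt 3 ≤ ‖x‖ := by nlinarith
  -- distance bounds
  have hdistA : 2 * Real.sqrt 3 - 1 ≤ dist (γ 0) (γ c) := by
    rw [hγ0, dist_eq_norm, norm_sub_rev]
    calc 2 * Real.sqrt 3 - 1 ≤ ‖x‖ - ‖A‖ := by rw [hA]; linarith
      _ ≤ ‖x - A‖ := norm_sub_norm_le x A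
  have hdistD : 2 * Real.sqrt 3 - 1 ≤ dist (γ c) (γ 1) := by
    rw [hγ1, dist_eq_norm]
    calc 2 * Real.sqrt 3 - 1 ≤ ‖x‖ - ‖D‖ := by rw [hD]; linarith
      _ ≤ ‖x - D‖ := norm_sub_norm_le x D
  refine ⟨⟨c, hc1, hseg⟩, ?_⟩
  -- length estimate via eVariation
  have hsplit := eVariationOn.Icc_add_Icc γ hc1.1 hc1.2
    (Set.mem_univ c) (s := (Set.univ : Set ℝ))
  simp only [Set.univ_inter] at hsplit
  rw [← hsplit]
  have e1 : ENNReal.ofReal (2 * Real.sqrt 3 - 1) ≤ eVariationOn γ (Set.Icc 0 c) := by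
    refine le_trans ?_ (eVariationOn.edist_le γ (Set.left_mem_Icc.mpr hc1.1)
      (Set.right_mem_Icc.mpr hc1.1))
    rw [edist_dist]
    exact ENNReal.ofReal_le_ofReal hdistA
  have e2 : ENNReal.ofReal (2 * Real.sqrt 3 - 1) ≤ eVariationOn γ (Set.Icc c 1) := by
    refine le_trans ?_ (eVariationOn.edist_le γ (Set.left_mem_Icc.mpr hc1.2)
      (Set.right_mem_Icc.mpr hc1.2))
    rw [edist_dist]
    exact ENNReal.ofReal_le_ofReal hdistD
  have : ENNReal.ofReal (2 * (2 * Real.sqrt 3 - 1))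
      = ENNReal.ofReal (2 * Real.sqrt 3 - 1) + ENNReal.ofReal (2 * Real.sqrt 3 - 1) := by
    rw [← ENNReal.ofReal_add (by linarith) (by linarith)]
    ring_nf
  rw [this]
  exact add_le_add e1 e2
end
end
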